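/- arXiv:2306.13403 — 3 statements merged into one kernel-verified Lean document; each statement's English description precedes it below -/
import Mathlib

section
/- Let H be a finite abelian group and suppose p₁, p₂, p₃ : H → R_{≥0} are three probability distributions on H such that ‖p₁ − u_H‖₁ + ‖p₂ − u_H‖₁ + ‖p₃ − u_H‖₁ ≤ 1, where u_H is the uniform distribution on H and ‖p − u_H‖₁ := Σ_{x ∈ H} |p(x) − 1/|H||. Then there exists a pair of random variables (X, Y) taking values in H (not necessarily independent) such that the distribution of X is p₁, the distribution of Y is p₂, and the distribution of X − Y is p₃. -/
open Finset

noncomputable section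

/-- `IsPMF p`: the finitely supported function `p` is a probability mass function,
modelling the distribution of a random variable taking values in a finite subset. -/
def IsPMF {G : Type*} (p : G →₀ ℝ) : Prop :=
  (∀ x, 0 ≤ p x) ∧ ∑ x ∈ p.support, p x = 1

/-- Shannon entropy `H(X)` of a random variable with distribution `p`. -/
def ent {G : Type*} (p : G →₀ ℝ) : ℝ :=
  ∑ x ∈ p.support, Real.negMulLog (p x)

/-- The joint distribution of a pair of independent random variables with
distributions `p` and `q`. -/
def prodPMF {G H : Type*} (p : G →₀ ℝ) (q : H →₀ ℝ) : (G × H) →₀ ℝ :=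
  Finsupp.onFinset (p.support ×ˢ q.support) (fun z => p z.1 * q z.2)
    (fun _z hz => Finset.mem_product.2
      ⟨Finsupp.mem_support_iff.2 (left_ne_zero_of_mul hz),
       Finsupp.mem_support_iff.2 (right_ne_zero_of_mul hz)⟩)

/-- The distribution of `X - Y`, where `X, Y` are independent with distributions `p, q`. -/
def subDist {G : Type*} [AddCommGroup G] (p q : G →₀ ℝ) : G →₀ ℝ :=
  Finsupp.mapDomain (fun z : G × G => z.1 - z.2) (prodPMF p q)

/-- The distribution of `X + Y`, where `X, Y` are independent with distributions `p, q`. -/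
def sumDist {G : Type*} [AddCommGroup G] (p q : G →₀ ℝ) : G →₀ ℝ :=
  Finsupp.mapDomain (fun z : G × G => z.1 + z.2) (prodPMF p q)

/-- The entropic Ruzsa distance `d_ent(X, Y) = H(X' - Y') - H(X)/2 - H(Y)/2`,
where `X', Y'` are independent copies of `X ~ p`, `Y ~ q`. -/
def dEnt {G : Type*} [AddCommGroup G] (p q : G →₀ ℝ) : ℝ :=
  ent (subDist p q) - ent p / 2 - ent q / 2

/-- The entropic doubling constant `σ_ent[X] = exp(H(X₁ + X₂) - H(X))`
for independent copies `X₁, X₂` of `X ~ p`. -/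
def sigmaEnt {G : Type*} [AddCommGroup G] (p : G →₀ ℝ) : ℝ :=
  Real.exp (ent (sumDist p p) - ent p)

/-- First marginal of a joint distribution on `G × H`. -/
def fstMarg {G H : Type*} (w : (G × H) →₀ ℝ) : G →₀ ℝ :=
  Finsupp.mapDomain Prod.fst w

/-- Second marginal of a joint distribution on `G × H`. -/
def sndMarg {G H : Type*} (w : (G × H) →₀ ℝ) : H →₀ ℝ :=
  Finsupp.mapDomain Prod.snd w

/-- The maximal entropic Ruzsa distance `d*_ent(X, Y)`: the supremum of
`H(X' - Y') - H(X)/2 - H(Y)/2` over all couplings `(X', Y')` of `X ~ p` and `Y ~ q`. -/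
def dEntStar {G : Type*} [AddCommGroup G] (p q : G →₀ ℝ) : ℝ :=
  sSup { d : ℝ | ∃ w : (G × G) →₀ ℝ, IsPMF w ∧ fstMarg w = p ∧ sndMarg w = q ∧
    d = ent (Finsupp.mapDomain (fun z : G × G => z.1 - z.2) w) - ent p / 2 - ent q / 2 }

/-- The uniform distribution on a finite set `A`. -/
def unif {G : Type*} [DecidableEq G] (A : Finset G) : G →₀ ℝ :=
  Finsupp.onFinset A (fun x => if x ∈ A then ((A.card : ℝ))⁻¹ else 0)
    (fun x hx => by by_contra h; exact hx (if_neg h))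

/-- The distribution of `X` conditioned on the event `π(X) = y`, where `X ~ p`. -/
def condFiber {G H : Type*} [DecidableEq H] (π : G → H) (y : H) (p : G →₀ ℝ) : G →₀ ℝ :=
  Finsupp.onFinset p.support
    (fun x => if π x = y then p x / (Finsupp.mapDomain π p) y else 0)
    (fun x hx => Finsupp.mem_support_iff.2 (fun h0 => hx (by (try simp only []); split_ifs <;> simp [h0])))

/-- The entropy `h(p)` of the Bernoulli distribution with parameter `p`. -/
def binEnt (p : ℝ) : ℝ := Real.negMulLog p + Real.negMulLog (1 - p)

/-- Skew-dimension bound: `skewDimLE A r` means the skew-dimension of `A ⊆ ℤ^D`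
is at most `r`. -/
def skewDimLE {D : ℕ} : Finset (Fin D → ℤ) → ℕ → Prop
  | A, 0 => A.card ≤ 1
  | A, r + 1 => A.card ≤ 1 ∨ ∃ i : Fin D, ∀ n : ℤ,
      skewDimLE (A.filter fun v => v i = n) r

/-- The (affine) dimension of a finite subset `A ⊆ ℤ^D`: the dimension of the
real span of `A - A`. -/
def dimAff {D : ℕ} (A : Finset (Fin D → ℤ)) : ℕ :=
  Module.finrank ℝ (Submodule.span ℝ
    { x : Fin D → ℝ | ∃ a ∈ A, ∃ b ∈ A, x = fun i => ((a i : ℝ) - (b i : ℝ)) })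


namespace Statement15Aux

set_option linter.unusedSectionVars false
set_option maxHeartbeats 1000000

open MeasureTheory intervalIntegral


variable {G : Type*} [Fintype G] [DecidableEq G]

def tl (p φ : G → ℝ) (t : ℝ) : ℝ := ∑ x, if t < φ x then p x else 0
def tlc (p φ : G → ℝ) (t : ℝ) : ℝ := ∑ x, if t ≤ φ x then p x else 0

lemma tl_nonneg {p : G → ℝ} (φ : G → ℝ) (hp : ∀ x, 0 ≤ p x) (t : ℝ) : 0 ≤ tl p φ t :=
  Finset.sum_nonneg fun x _ => by split <;> simp [hp x]

lemma tlc_nonneg {p : G → ℝ} (φ : G → ℝ) (hp : ∀ x, 0 ≤ p x) (t : ℝ) : 0 ≤ tlc p φ t :=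
  Finset.sum_nonneg fun x _ => by split <;> simp [hp x]

lemma tl_antitone {p φ : G → ℝ} (hp : ∀ x, 0 ≤ p x) : Antitone (tl p φ) := by
  intro s t hst
  apply Finset.sum_le_sum
  intro x _
  split_ifs with h1 h2 <;> try linarith [hp x]

lemma tlc_antitone {p φ : G → ℝ} (hp : ∀ x, 0 ≤ p x) : Antitone (tlc p φ) := by
  intro s t hst
  apply Finset.sum_le_sum
  intro x _
  split_ifs with h1 h2 <;> try linarith [hp x]

lemma intble_if_lt (a c l r : ℝ) :
    IntervalIntegrable (fun t => if t < a then c else 0) volume l r := by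
  have h : (fun t : ℝ => if t < a then c else 0)
      = c • (fun t : ℝ => if t < a then (1:ℝ) else 0) := by
    funext t; simp only [Pi.smul_apply, smul_eq_mul]; split <;> simp
  rw [h]
  exact (Antitone.intervalIntegrable
    (by intro s t hst; dsimp only; split_ifs <;> linarith)).smul c

lemma intble_if_le (a c l r : ℝ) :
    IntervalIntegrable (fun t => if t ≤ a then c else 0) volume l r := by
  have h : (fun t : ℝ => if t ≤ a then c else 0)
      = c • (fun t : ℝ => if t ≤ a then (1:ℝ) else 0) := by
    funext t; simp only [Pi.smul_apply, smul_eq_mul]; split <;> simp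
  rw [h]
  exact (Antitone.intervalIntegrable
    (by intro s t hst; dsimp only; split_ifs <;> linarith)).smul c

lemma integral_if_lt (c a M : ℝ) (ha : 0 ≤ a) (hM : 0 ≤ M) :
    (∫ t in (0:ℝ)..M, (if t < a then c else 0)) = c * min a M := by
  have h : ∀ t : ℝ, (if t < a then c else 0) = Set.indicator (Set.Iio a) (fun _ => c) t := by
    intro t; by_cases h : t < a <;> simp [Set.indicator_apply, h]
  rw [intervalIntegral.integral_of_le hM]
  simp only [h]
  rw [MeasureTheory.integral_indicator measurableSet_Iio, MeasureTheory.setIntegral_const,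
    measureReal_restrict_apply measurableSet_Iio]
  rcases le_or_gt a M with hc | hc
  · have : Set.Iio a ∩ Set.Ioc 0 M = Set.Ioo 0 a := by
      ext t
      simp only [Set.mem_inter_iff, Set.mem_Iio, Set.mem_Ioc, Set.mem_Ioo]
      constructor
      · rintro ⟨h1, h2, h3⟩; exact ⟨h2, h1⟩
      · rintro ⟨h1, h2⟩; exact ⟨h2, h1, by linarith⟩
    rw [this, Real.volume_real_Ioo, max_eq_left (by linarith), min_eq_left hc,
      smul_eq_mul, sub_zero, mul_comm]
  · have : Set.Iio a ∩ Set.Ioc 0 M = Set.Ioc 0 M := by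
      ext t
      simp only [Set.mem_inter_iff, Set.mem_Iio, Set.mem_Ioc]
      constructor
      · rintro ⟨h1, h2⟩; exact h2
      · rintro ⟨h1, h2⟩; exact ⟨by linarith, h1, h2⟩
    rw [this, Real.volume_real_Ioc, max_eq_left (by linarith), min_eq_right hc.le,
      smul_eq_mul, sub_zero, mul_comm]

lemma integral_if_le (c a M : ℝ) (ha : 0 ≤ a) (hM : 0 ≤ M) :
    (∫ t in (0:ℝ)..M, (if t ≤ a then c else 0)) = c * min a M := by
  have h : ∀ t : ℝ, (if t ≤ a then c else 0) = Set.indicator (Set.Iic a) (fun _ => c) t := by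
    intro t; by_cases h : t ≤ a <;> simp [Set.indicator_apply, h]
  rw [intervalIntegral.integral_of_le hM]
  simp only [h]
  rw [MeasureTheory.integral_indicator measurableSet_Iic, MeasureTheory.setIntegral_const,
    measureReal_restrict_apply measurableSet_Iic]
  have : Set.Iic a ∩ Set.Ioc 0 M = Set.Ioc 0 (min a M) := by
    ext t
    simp only [Set.mem_inter_iff, Set.mem_Iic, Set.mem_Ioc, le_min_iff]
    constructor
    · rintro ⟨h1, h2, h3⟩; exact ⟨h2, h1, h3⟩
    · rintro ⟨h1, h2, h3⟩; exact ⟨h2, h1, h3⟩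
  rw [this, Real.volume_real_Ioc, sub_zero, max_eq_left (le_min ha hM),
    smul_eq_mul, mul_comm]

lemma integral_tl (p φ : G → ℝ) (M : ℝ) (hM : 0 ≤ M) (hφ : ∀ x, 0 ≤ φ x) :
    (∫ t in (0:ℝ)..M, tl p φ t) = ∑ x, p x * min (φ x) M := by
  unfold tl
  rw [intervalIntegral.integral_finset_sum (fun x _ => intble_if_lt (φ x) (p x) 0 M)]
  exact Finset.sum_congr rfl fun x _ => integral_if_lt (p x) (φ x) M (hφ x) hM

lemma integral_tlc (p φ : G → ℝ) (M : ℝ) (hM : 0 ≤ M) (hφ : ∀ x, 0 ≤ φ x) :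
    (∫ t in (0:ℝ)..M, tlc p φ t) = ∑ x, p x * min (φ x) M := by
  unfold tlc
  rw [intervalIntegral.integral_finset_sum (fun x _ => intble_if_le (φ x) (p x) 0 M)]
  exact Finset.sum_congr rfl fun x _ => integral_if_le (p x) (φ x) M (hφ x) hM

lemma sum_ite_diff_le (p q : G → ℝ) (hpq : ∑ x, p x = ∑ x, q x) (P : G → Prop) [DecidablePred P] :
    ∑ x, (if P x then p x else 0)
      ≤ (∑ x, (if P x then q x else 0)) + (∑ x, |p x - q x|) / 2 := by
  have h0 : ∑ x, (p x - q x) = 0 := by rw [Finset.sum_sub_distrib, hpq, sub_self]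
  have h2 : ∑ x, ((if P x then p x else 0) - (if P x then q x else 0))
      ≤ ∑ x, (|p x - q x| + (p x - q x)) / 2 := by
    apply Finset.sum_le_sum
    intro x _
    have ha := abs_nonneg (p x - q x)
    have hb := le_abs_self (p x - q x)
    have hb2 := neg_abs_le (p x - q x)
    split_ifs with h <;> linarith
  rw [Finset.sum_sub_distrib] at h2
  have h3 : ∑ x, (|p x - q x| + (p x - q x)) / 2 = (∑ x, |p x - q x|) / 2 := by
    rw [← Finset.sum_div, Finset.sum_add_distrib, h0, add_zero]
  linarith

lemma tl_const (c : ℝ) (φ : G → ℝ) (t : ℝ) :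
    tl (fun _ => c) φ t = c * ((univ : Finset G).filter fun x => t < φ x).card := by
  unfold tl
  rw [Finset.sum_ite, Finset.sum_const, Finset.sum_const_zero, add_zero, nsmul_eq_mul, mul_comm]

lemma tlc_const (c : ℝ) (φ : G → ℝ) (t : ℝ) :
    tlc (fun _ => c) φ t = c * ((univ : Finset G).filter fun x => t ≤ φ x).card := by
  unfold tlc
  rw [Finset.sum_ite, Finset.sum_const, Finset.sum_const_zero, add_zero, nsmul_eq_mul, mul_comm]

lemma card_lt_filter_le_card_lt (φ ψ : G → ℝ) (e : G → G) (he : Function.Injective e)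
    (hcomp : ∀ d, φ d ≤ ψ (e d)) (t : ℝ) :
    ((univ : Finset G).filter fun d => t < φ d).card
      ≤ ((univ : Finset G).filter fun x => t < ψ x).card := by
  apply Finset.card_le_card_of_injOn e
  · intro d hd
    simp only [Finset.mem_coe, Finset.mem_filter, Finset.mem_univ, true_and] at *
    exact lt_of_lt_of_le hd (hcomp d)
  · exact he.injOn

lemma card_lt_filter_le_card_le (φ ψ : G → ℝ) (e : G → G) (he : Function.Injective e)
    (hcomp : ∀ d, φ d ≤ ψ (e d)) (t : ℝ) :
    ((univ : Finset G).filter fun d => t < φ d).card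
      ≤ ((univ : Finset G).filter fun x => t ≤ ψ x).card := by
  apply Finset.card_le_card_of_injOn e
  · intro d hd
    simp only [Finset.mem_coe, Finset.mem_filter, Finset.mem_univ, true_and] at *
    exact le_of_lt (lt_of_lt_of_le hd (hcomp d))
  · exact he.injOn

lemma pigeon {G' : Type*} [AddCommGroup G'] [Fintype G'] [DecidableEq G'] (S T : Finset G')
    (h : Fintype.card G' < S.card + T.card) (d : G') : ∃ x ∈ S, x - d ∈ T := by
  by_contra hc
  push_neg at hc
  have hdisj : Disjoint S (T.image (· + d)) := by
    rw [Finset.disjoint_left]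
    intro x hxS hxT
    obtain ⟨y, hyT, hyx⟩ := Finset.mem_image.1 hxT
    exact hc x hxS (by rw [← hyx]; simpa using hyT)
  have hcup := Finset.card_union_of_disjoint hdisj
  have hle : (S ∪ T.image (· + d)).card ≤ Fintype.card G' := Finset.card_le_univ _
  rw [hcup, Finset.card_image_of_injective _ (add_left_injective d)] at hle
  omega


lemma dual_ineq {G : Type*} [AddCommGroup G] [Fintype G] [DecidableEq G]
    (p₁ p₂ p₃ : G → ℝ)
    (h₁ : (∀ x, 0 ≤ p₁ x) ∧ ∑ x, p₁ x = 1)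
    (h₂ : (∀ x, 0 ≤ p₂ x) ∧ ∑ x, p₂ x = 1)
    (h₃ : (∀ x, 0 ≤ p₃ x) ∧ ∑ x, p₃ x = 1)
    (hδ : (∑ x, |p₁ x - ((Fintype.card G : ℝ))⁻¹|) +
          (∑ x, |p₂ x - ((Fintype.card G : ℝ))⁻¹|) +
          (∑ x, |p₃ x - ((Fintype.card G : ℝ))⁻¹|) ≤ 1)
    (f g h : G → ℝ) (hfgh : ∀ x y, 0 ≤ f x + g y + h (x - y)) :
    0 ≤ (∑ x, p₁ x * f x) + (∑ x, p₂ x * g x) + (∑ x, p₃ x * h x) := by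
  haveI : Nonempty G := ⟨0⟩
  set n := Fintype.card G with hn
  have hnpos : 0 < n := Fintype.card_pos
  set u : ℝ := (n : ℝ)⁻¹ with hu
  have hupos : 0 < u := by positivity
  set pu : G → ℝ := fun _ => u with hpu
  have hpu_nonneg : ∀ x : G, 0 ≤ pu x := fun _ => hupos.le
  have hsum_pu : ∑ _x : G, u = 1 := by
    rw [Finset.sum_const, Finset.card_univ, nsmul_eq_mul, hu, mul_inv_cancel₀]
    exact_mod_cast hnpos.ne'
  set δ₁ : ℝ := (∑ x, |p₁ x - u|) / 2 with hδ₁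
  set δ₂ : ℝ := (∑ x, |p₂ x - u|) / 2 with hδ₂
  set δ₃ : ℝ := (∑ x, |p₃ x - u|) / 2 with hδ₃
  have hδ₁0 : 0 ≤ δ₁ := by positivity
  have hδ₂0 : 0 ≤ δ₂ := by positivity
  have hδ₃0 : 0 ≤ δ₃ := by positivity
  have hδsum : δ₁ + δ₂ + δ₃ ≤ 1 / 2 := by
    rw [hδ₁, hδ₂, hδ₃]; linarith [hδ]
  -- minimizers
  obtain ⟨a₀, -, ha₀⟩ := Finset.exists_min_image (univ : Finset G) f ⟨0, mem_univ 0⟩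
  obtain ⟨b₀, -, hb₀⟩ := Finset.exists_min_image (univ : Finset G) g ⟨0, mem_univ 0⟩
  set f' : G → ℝ := fun x => f x - f a₀ with hf'
  set g' : G → ℝ := fun x => g x - g b₀ with hg'
  have hf'0 : ∀ x, 0 ≤ f' x := fun x => sub_nonneg.2 (ha₀ x (mem_univ x))
  have hg'0 : ∀ x, 0 ≤ g' x := fun x => sub_nonneg.2 (hb₀ x (mem_univ x))
  have hf'a₀ : f' a₀ = 0 := sub_self _
  have hg'b₀ : g' b₀ = 0 := sub_self _
  -- the min-convolution
  set m : G → ℝ := fun d => (univ : Finset G).inf' ⟨0, mem_univ 0⟩ (fun x => f' x + g' (x - d))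
    with hm
  have hm_le : ∀ d x, m d ≤ f' x + g' (x - d) := fun d x => Finset.inf'_le _ (mem_univ x)
  have hm0 : ∀ d, 0 ≤ m d := fun d =>
    Finset.le_inf' _ _ fun x _ => add_nonneg (hf'0 x) (hg'0 _)
  have hm_h : ∀ d, -(m d) - f a₀ - g b₀ ≤ h d := by
    intro d
    have : -(h d) - f a₀ - g b₀ ≤ m d := by
      apply Finset.le_inf'
      intro x _
      have h0 := hfgh x (x - d)
      have hxd : x - (x - d) = d := by abel
      rw [hxd] at h0
      simp only [hf', hg']
      linarith
    linarith
  -- the maximum M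
  obtain ⟨dstar, -, hdstar⟩ := Finset.exists_max_image (univ : Finset G) m ⟨0, mem_univ 0⟩
  set M : ℝ := m dstar with hM
  have hM0 : 0 ≤ M := hm0 dstar
  have hmM : ∀ d, m d ≤ M := fun d => hdstar d (mem_univ d)
  -- tail functions
  set U₁ : ℝ → ℝ := tl pu f' with hU₁def
  set V₂ : ℝ → ℝ := tlc pu g' with hV₂def
  set Q₁ : ℝ → ℝ := tl p₁ f' with hQ₁def
  set Q₂ : ℝ → ℝ := tlc p₂ g' with hQ₂def
  set χ : ℝ → ℝ := tl p₃ m with hχdef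
  -- antitonicity and integrability
  have hU₁ant : Antitone U₁ := tl_antitone hpu_nonneg
  have hV₂ant : Antitone V₂ := tlc_antitone hpu_nonneg
  have hQ₁ant : Antitone Q₁ := tl_antitone h₁.1
  have hQ₂ant : Antitone Q₂ := tlc_antitone h₂.1
  have hχant : Antitone χ := tl_antitone h₃.1
  have hminant : Antitone (fun t => min (U₁ t) (V₂ t)) := fun s t hst =>
    min_le_min (hU₁ant hst) (hV₂ant hst)
  have hmaxant : Antitone (fun t => max (U₁ t) (V₂ t)) := fun s t hst =>
    max_le_max (hU₁ant hst) (hV₂ant hst)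
  have hI₁ant : Antitone (fun t => max (U₁ t - δ₁) 0) := fun s t hst =>
    max_le_max (by linarith [hU₁ant hst]) le_rfl
  have hI₂ant : Antitone (fun t => max (V₂ t - δ₂) 0) := fun s t hst =>
    max_le_max (by linarith [hV₂ant hst]) le_rfl
  have hreflmono : Monotone (fun t => V₂ (M - t)) := fun s t hst =>
    hV₂ant (by linarith : M - t ≤ M - s)
  -- dTV comparisons
  have habs1 : ∑ x, |pu x - p₁ x| = 2 * δ₁ := by
    rw [hδ₁]
    rw [show ∑ x, |pu x - p₁ x| = ∑ x, |p₁ x - u| from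
      Finset.sum_congr rfl fun x _ => by rw [abs_sub_comm]]
    ring
  have habs2 : ∑ x, |pu x - p₂ x| = 2 * δ₂ := by
    rw [hδ₂]
    rw [show ∑ x, |pu x - p₂ x| = ∑ x, |p₂ x - u| from
      Finset.sum_congr rfl fun x _ => by rw [abs_sub_comm]]
    ring
  have habs3 : ∑ x, |p₃ x - pu x| = 2 * δ₃ := by
    rw [hδ₃]; ring
  have hQ₁U : ∀ t, U₁ t ≤ Q₁ t + δ₁ := by
    intro t
    have := sum_ite_diff_le pu p₁ (by rw [h₁.2]; exact hsum_pu) (fun x => t < f' x)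
    rw [habs1] at this
    simp only [hU₁def, hQ₁def, tl]
    linarith
  have hQ₂V : ∀ t, V₂ t ≤ Q₂ t + δ₂ := by
    intro t
    have := sum_ite_diff_le pu p₂ (by rw [h₂.2]; exact hsum_pu) (fun x => t ≤ g' x)
    rw [habs2] at this
    simp only [hV₂def, hQ₂def, tlc]
    linarith
  have hχpu : ∀ t, χ t ≤ tl pu m t + δ₃ := by
    intro t
    have := sum_ite_diff_le p₃ pu (by rw [h₃.2]; exact hsum_pu.symm) (fun x => t < m x)
    rw [habs3] at this
    show tl p₃ m t ≤ tl pu m t + δ₃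
    simp only [tl] at this ⊢
    linarith
  -- injections
  have hmf : ∀ t, tl pu m t ≤ U₁ t := by
    intro t
    rw [hU₁def, hpu, tl_const, tl_const]
    apply mul_le_mul_of_nonneg_left _ hupos.le
    exact_mod_cast Nat.cast_le.2 (card_lt_filter_le_card_lt m f' (fun d => d + b₀)
      (add_left_injective b₀)
      (fun d => by
        have := hm_le d (d + b₀)
        have hsimp : d + b₀ - d = b₀ := by abel
        rw [hsimp, hg'b₀, add_zero] at this
        exact this) t)
  have hmg : ∀ t, tl pu m t ≤ V₂ t := by
    intro t
    rw [hV₂def, hpu, tl_const, tlc_const]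
    apply mul_le_mul_of_nonneg_left _ hupos.le
    exact_mod_cast Nat.cast_le.2 (card_lt_filter_le_card_le m g' (fun d => a₀ - d)
      sub_right_injective
      (fun d => by
        have := hm_le d a₀
        rw [hf'a₀, zero_add] at this
        exact this) t)
  have hχmin : ∀ t, χ t ≤ min (U₁ t) (V₂ t) + δ₃ := fun t => by
    have := hχpu t
    have h2 := le_min (hmf t) (hmg t)
    linarith
  -- the pigeonhole lower bound
  have hUV : ∀ t ∈ Set.Icc (0:ℝ) M, 1 ≤ U₁ t + V₂ (M - t) := by
    rintro t ⟨ht0, htM⟩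
    rcases eq_or_lt_of_le htM with heq | htM
    · have hV0 : V₂ (M - t) = 1 := by
        rw [heq, sub_self, hV₂def, hpu, tlc_const]
        have h5 : ((univ : Finset G).filter fun x => (0:ℝ) ≤ g' x) = univ :=
          Finset.filter_true_of_mem fun x _ => hg'0 x
        rw [h5, Finset.card_univ]
        rw [hu, inv_mul_cancel₀]
        exact_mod_cast hnpos.ne'
      have h6 : 0 ≤ U₁ t := tl_nonneg f' hpu_nonneg t
      linarith
    · by_contra hcon
      push_neg at hcon
      set A := (univ : Finset G).filter (fun x => t < f' x) with hA
      set B := (univ : Finset G).filter (fun x => M - t ≤ g' x) with hB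
      have hUc : U₁ t = u * A.card := by rw [hU₁def, hpu, tl_const]
      have hVc : V₂ (M - t) = u * B.card := by rw [hV₂def, hpu, tlc_const]
      have hcard : A.card + B.card < n := by
        by_contra hge
        push_neg at hge
        have h1 : (1:ℝ) = u * n := by
          rw [hu, inv_mul_cancel₀]; exact_mod_cast hnpos.ne'
        have h2 : u * (n:ℝ) ≤ u * ((A.card : ℝ) + B.card) := by
          apply mul_le_mul_of_nonneg_left _ hupos.le
          exact_mod_cast hge
        rw [hUc, hVc] at hcon
        rw [mul_add] at h2
        linarith
      set S := (univ : Finset G).filter (fun x => ¬ t < f' x) with hS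
      set T := (univ : Finset G).filter (fun x => ¬ (M - t) ≤ g' x) with hT
      have hAS : A.card + S.card = n := by
        rw [hA, hS, Finset.card_filter_add_card_filter_not, Finset.card_univ]
      have hBT : B.card + T.card = n := by
        rw [hB, hT, Finset.card_filter_add_card_filter_not, Finset.card_univ]
      have hST : n < S.card + T.card := by omega
      obtain ⟨x, hxS, hxT⟩ := pigeon S T (by rw [hn] at hST; exact_mod_cast hST) dstar
      rw [hS, Finset.mem_filter] at hxS
      rw [hT, Finset.mem_filter] at hxT
      have hx1 : f' x ≤ t := not_lt.1 hxS.2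
      have hx2 : g' (x - dstar) < M - t := not_le.1 hxT.2
      have h7 := hm_le dstar x
      rw [← hM] at h7
      linarith
  -- integrability on [0, M]
  have iU₁ := hU₁ant.intervalIntegrable (a := 0) (b := M) (μ := volume)
  have iV₂ := hV₂ant.intervalIntegrable (a := 0) (b := M) (μ := volume)
  have iQ₁ := hQ₁ant.intervalIntegrable (a := 0) (b := M) (μ := volume)
  have iQ₂ := hQ₂ant.intervalIntegrable (a := 0) (b := M) (μ := volume)
  have iχ := hχant.intervalIntegrable (a := 0) (b := M) (μ := volume)
  have imin := hminant.intervalIntegrable (a := 0) (b := M) (μ := volume)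
  have imax := hmaxant.intervalIntegrable (a := 0) (b := M) (μ := volume)
  have iI₁ := hI₁ant.intervalIntegrable (a := 0) (b := M) (μ := volume)
  have iI₂ := hI₂ant.intervalIntegrable (a := 0) (b := M) (μ := volume)
  have irefl := hreflmono.intervalIntegrable (a := 0) (b := M) (μ := volume)
  -- named integrals
  set J : ℝ := ∫ t in (0:ℝ)..M, min (U₁ t) (V₂ t) with hJ
  set K : ℝ := ∫ t in (0:ℝ)..M, max (U₁ t) (V₂ t) with hK
  set I₁ : ℝ := ∫ t in (0:ℝ)..M, max (U₁ t - δ₁) 0 with hI₁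
  set I₂ : ℝ := ∫ t in (0:ℝ)..M, max (V₂ t - δ₂) 0 with hI₂
  -- layer cake identities
  have hlcQ₁ : (∫ t in (0:ℝ)..M, Q₁ t) = ∑ x, p₁ x * min (f' x) M := by
    rw [hQ₁def]; exact integral_tl p₁ f' M hM0 hf'0
  have hlcQ₂ : (∫ t in (0:ℝ)..M, Q₂ t) = ∑ x, p₂ x * min (g' x) M := by
    rw [hQ₂def]; exact integral_tlc p₂ g' M hM0 hg'0
  have hlcχ : (∫ t in (0:ℝ)..M, χ t) = ∑ x, p₃ x * m x := by
    rw [hχdef, integral_tl p₃ m M hM0 hm0]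
    exact Finset.sum_congr rfl fun x _ => by rw [min_eq_left (hmM x)]
  -- step: E₁ ≥ ∫ Q₁ ≥ I₁
  have hE₁ : I₁ ≤ ∑ x, p₁ x * f' x := by
    have s1 : I₁ ≤ ∫ t in (0:ℝ)..M, Q₁ t := by
      rw [hI₁]
      apply intervalIntegral.integral_mono_on hM0 iI₁ iQ₁
      intro t _
      apply max_le
      · linarith [hQ₁U t]
      · exact tl_nonneg f' h₁.1 t
    have s2 : (∑ x, p₁ x * min (f' x) M) ≤ ∑ x, p₁ x * f' x :=
      Finset.sum_le_sum fun x _ => mul_le_mul_of_nonneg_left (min_le_left _ _) (h₁.1 x)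
    rw [hlcQ₁] at s1
    linarith
  have hE₂ : I₂ ≤ ∑ x, p₂ x * g' x := by
    have s1 : I₂ ≤ ∫ t in (0:ℝ)..M, Q₂ t := by
      rw [hI₂]
      apply intervalIntegral.integral_mono_on hM0 iI₂ iQ₂
      intro t _
      apply max_le
      · linarith [hQ₂V t]
      · exact tlc_nonneg g' h₂.1 t
    have s2 : (∑ x, p₂ x * min (g' x) M) ≤ ∑ x, p₂ x * g' x :=
      Finset.sum_le_sum fun x _ => mul_le_mul_of_nonneg_left (min_le_left _ _) (h₂.1 x)
    rw [hlcQ₂] at s1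
    linarith
  -- step: E₃ ≤ J + δ₃ M
  have hE₃ : (∑ x, p₃ x * m x) ≤ J + δ₃ * M := by
    rw [← hlcχ]
    have s1 : (∫ t in (0:ℝ)..M, χ t) ≤ ∫ t in (0:ℝ)..M, (min (U₁ t) (V₂ t) + δ₃) := by
      apply intervalIntegral.integral_mono_on hM0 iχ (imin.add (intervalIntegrable_const))
      intro t _
      exact hχmin t
    have s2 : (∫ t in (0:ℝ)..M, (min (U₁ t) (V₂ t) + δ₃)) = J + δ₃ * M := by
      rw [intervalIntegral.integral_add imin intervalIntegrable_const,
        intervalIntegral.integral_const, ← hJ]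
      simp only [sub_zero, smul_eq_mul]
      ring
    linarith
  -- step: I₁ + I₂ ≥ J + K − (δ₁+δ₂) M
  have hIJK : J + K - (δ₁ + δ₂) * M ≤ I₁ + I₂ := by
    have s1 : (∫ t in (0:ℝ)..M, (min (U₁ t) (V₂ t) + max (U₁ t) (V₂ t) - (δ₁ + δ₂)))
        ≤ ∫ t in (0:ℝ)..M, (max (U₁ t - δ₁) 0 + max (V₂ t - δ₂) 0) := by
      apply intervalIntegral.integral_mono_on hM0
        ((imin.add imax).sub intervalIntegrable_const) (iI₁.add iI₂)
      intro t _
      have e1 : min (U₁ t) (V₂ t) + max (U₁ t) (V₂ t) = U₁ t + V₂ t := min_add_max _ _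
      have e2 : U₁ t - δ₁ ≤ max (U₁ t - δ₁) 0 := le_max_left _ _
      have e3 : V₂ t - δ₂ ≤ max (V₂ t - δ₂) 0 := le_max_left _ _
      linarith
    have s2 : (∫ t in (0:ℝ)..M, (min (U₁ t) (V₂ t) + max (U₁ t) (V₂ t) - (δ₁ + δ₂)))
        = J + K - (δ₁ + δ₂) * M := by
      rw [intervalIntegral.integral_sub (imin.add imax) intervalIntegrable_const,
        intervalIntegral.integral_add imin imax, intervalIntegral.integral_const,
        ← hJ, ← hK]
      simp only [sub_zero, smul_eq_mul]
      ring
    have s3 : (∫ t in (0:ℝ)..M, (max (U₁ t - δ₁) 0 + max (V₂ t - δ₂) 0)) = I₁ + I₂ := by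
      rw [intervalIntegral.integral_add iI₁ iI₂, ← hI₁, ← hI₂]
    rw [s2, s3] at s1
    exact s1
  -- step: J ≤ K
  have hJK : J ≤ K := by
    rw [hJ, hK]
    apply intervalIntegral.integral_mono_on hM0 imin imax
    intro t _
    exact min_le_max
  -- step: M ≤ J + K
  have hMJK : M ≤ J + K := by
    have s1 : (∫ t in (0:ℝ)..M, (1:ℝ)) ≤ ∫ t in (0:ℝ)..M, (U₁ t + V₂ (M - t)) := by
      apply intervalIntegral.integral_mono_on hM0 intervalIntegrable_const (iU₁.add irefl)
      intro t ht
      exact hUV t ht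
    have s2 : (∫ t in (0:ℝ)..M, (1:ℝ)) = M := by
      rw [intervalIntegral.integral_const]; simp
    have s3 : (∫ t in (0:ℝ)..M, (U₁ t + V₂ (M - t))) = J + K := by
      rw [intervalIntegral.integral_add iU₁ irefl]
      have s4 : (∫ t in (0:ℝ)..M, V₂ (M - t)) = ∫ t in (0:ℝ)..M, V₂ t := by
        rw [intervalIntegral.integral_comp_sub_left V₂ M]
        norm_num
      rw [s4]
      have s5 : (fun t => U₁ t + V₂ t) = fun t => min (U₁ t) (V₂ t) + max (U₁ t) (V₂ t) :=
        funext fun t => (min_add_max _ _).symm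
      rw [← intervalIntegral.integral_add iU₁ iV₂, s5,
        intervalIntegral.integral_add imin imax, ← hJ, ← hK]
    rw [s2, s3] at s1
    exact s1
  -- combine
  have hKM : M / 2 ≤ K := by linarith
  have hfinal : 0 ≤ (∑ x, p₁ x * f' x) + (∑ x, p₂ x * g' x) - (∑ x, p₃ x * m x) := by
    have hd3 : δ₃ * M ≤ (1/2 - δ₁ - δ₂) * M := by
      apply mul_le_mul_of_nonneg_right _ hM0
      linarith
    nlinarith [hE₁, hE₂, hE₃, hIJK, hKM]
  -- unshift
  have hsplit₁ : (∑ x, p₁ x * f x) = (∑ x, p₁ x * f' x) + f a₀ := by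
    rw [show (∑ x, p₁ x * f x) = ∑ x, (p₁ x * f' x + p₁ x * f a₀) from
      Finset.sum_congr rfl fun x _ => by rw [hf']; ring]
    rw [Finset.sum_add_distrib, ← Finset.sum_mul, h₁.2, one_mul]
  have hsplit₂ : (∑ x, p₂ x * g x) = (∑ x, p₂ x * g' x) + g b₀ := by
    rw [show (∑ x, p₂ x * g x) = ∑ x, (p₂ x * g' x + p₂ x * g b₀) from
      Finset.sum_congr rfl fun x _ => by rw [hg']; ring]
    rw [Finset.sum_add_distrib, ← Finset.sum_mul, h₂.2, one_mul]
  have hsplit₃ : (∑ x, p₃ x * (-(m x) - f a₀ - g b₀)) ≤ ∑ x, p₃ x * h x := by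
    apply Finset.sum_le_sum
    intro x _
    exact mul_le_mul_of_nonneg_left (hm_h x) (h₃.1 x)
  have hsum₃ : (∑ x, p₃ x * (-(m x) - f a₀ - g b₀))
      = -(∑ x, p₃ x * m x) - f a₀ - g b₀ := by
    rw [show (∑ x, p₃ x * (-(m x) - f a₀ - g b₀))
        = ∑ x, (-(p₃ x * m x) - p₃ x * (f a₀ + g b₀)) from
      Finset.sum_congr rfl fun x _ => by ring]
    rw [Finset.sum_sub_distrib, Finset.sum_neg_distrib, ← Finset.sum_mul, h₃.2, one_mul]
    ring
  rw [hsplit₁, hsplit₂]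
  rw [hsum₃] at hsplit₃
  linarith


theorem coupling_exists {G : Type*} [AddCommGroup G] [Fintype G] [DecidableEq G]
    (p₁ p₂ p₃ : G → ℝ)
    (h₁ : (∀ x, 0 ≤ p₁ x) ∧ ∑ x, p₁ x = 1)
    (h₂ : (∀ x, 0 ≤ p₂ x) ∧ ∑ x, p₂ x = 1)
    (h₃ : (∀ x, 0 ≤ p₃ x) ∧ ∑ x, p₃ x = 1)
    (hL1 : (∑ x, |p₁ x - ((Fintype.card G : ℝ))⁻¹|) +
           (∑ x, |p₂ x - ((Fintype.card G : ℝ))⁻¹|) +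
           (∑ x, |p₃ x - ((Fintype.card G : ℝ))⁻¹|) ≤ 1) :
    ∃ w : G × G → ℝ, (∀ z, 0 ≤ w z) ∧ (∑ z, w z = 1) ∧
      (∀ x, ∑ y, w (x, y) = p₁ x) ∧
      (∀ y, ∑ x, w (x, y) = p₂ y) ∧
      (∀ d, ∑ x, w (x, x - d) = p₃ d) := by
  classical
  -- the marginal map
  set T : ((G × G) → ℝ) →ₗ[ℝ] ((Fin 3 × G) → ℝ) :=
    { toFun := fun w iv => if iv.1 = 0 then ∑ y, w (iv.2, y)
        else if iv.1 = 1 then ∑ x, w (x, iv.2) else ∑ x, w (x, x - iv.2),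
      map_add' := by
        intro w v; funext iv
        by_cases h0 : iv.1 = 0 <;> by_cases h1 : iv.1 = 1 <;>
          simp [h0, h1, Finset.sum_add_distrib]
      map_smul' := by
        intro c w; funext iv
        by_cases h0 : iv.1 = 0 <;> by_cases h1 : iv.1 = 1 <;>
          simp [h0, h1, Finset.mul_sum] } with hT
  have hTapp : ∀ (w : (G × G) → ℝ) (i : Fin 3) (v : G),
      T w (i, v) = if i = 0 then ∑ y, w (v, y)
        else if i = 1 then ∑ x, w (x, v) else ∑ x, w (x, x - v) := fun _ _ _ => rfl
  set Δ : Set ((G × G) → ℝ) := {w | (∀ z, 0 ≤ w z) ∧ ∑ z, w z = 1} with hΔ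
  set P : (Fin 3 × G) → ℝ :=
    fun iv => if iv.1 = 0 then p₁ iv.2 else if iv.1 = 1 then p₂ iv.2 else p₃ iv.2 with hP
  have key : P ∈ T '' Δ := by
    by_contra hnot
    -- convexity
    have hΔconv : Convex ℝ Δ := by
      intro w hw v hv a b ha hb hab
      constructor
      · intro z
        have := hw.1 z; have := hv.1 z
        simp only [Pi.add_apply, Pi.smul_apply, smul_eq_mul]
        positivity
      · simp only [Pi.add_apply, Pi.smul_apply, smul_eq_mul]
        rw [Finset.sum_add_distrib, ← Finset.mul_sum, ← Finset.mul_sum, hw.2, hv.2]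
        simpa using hab
    -- compactness
    have hclosed : IsClosed Δ := by
      have h1 : IsClosed {w : (G × G) → ℝ | ∀ z, 0 ≤ w z} := by
        have he : {w : (G × G) → ℝ | ∀ z, 0 ≤ w z} = ⋂ z, {w | 0 ≤ w z} := by
          ext w; simp [Set.mem_iInter]
        rw [he]
        exact isClosed_iInter fun z => isClosed_le continuous_const (continuous_apply z)
      have h2 : IsClosed {w : (G × G) → ℝ | ∑ z, w z = 1} :=
        isClosed_eq (by continuity) continuous_const
      have he : Δ = {w : (G × G) → ℝ | ∀ z, 0 ≤ w z} ∩ {w | ∑ z, w z = 1} := by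
        ext w; simp [hΔ, Set.mem_setOf_eq, Set.mem_inter_iff]
      rw [he]; exact h1.inter h2
    have hsub : Δ ⊆ Set.pi Set.univ (fun _ : G × G => Set.Icc (0:ℝ) 1) := by
      intro w hw z _
      refine ⟨hw.1 z, ?_⟩
      rw [← hw.2]
      exact Finset.single_le_sum (fun i _ => hw.1 i) (mem_univ z)
    have hcomp : IsCompact Δ :=
      (isCompact_univ_pi fun _ => isCompact_Icc).of_isClosed_subset hclosed hsub
    have hTcont : Continuous T := T.continuous_of_finiteDimensional
    have himg : IsCompact (T '' Δ) := hcomp.image hTcont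
    obtain ⟨φ, c, hφ1, hφ2⟩ :=
      geometric_hahn_banach_closed_point (hΔconv.linear_image T) himg.isClosed hnot
    -- coefficient functions
    set FF : G → ℝ := fun v => φ (Pi.single ((0 : Fin 3), v) 1) with hFF
    set GG : G → ℝ := fun v => φ (Pi.single ((1 : Fin 3), v) 1) with hGG
    set HH : G → ℝ := fun v => φ (Pi.single ((2 : Fin 3), v) 1) with hHH
    have heval : ∀ q : (Fin 3 × G) → ℝ,
        φ q = (∑ v, q (0, v) * FF v) + (∑ v, q (1, v) * GG v) + (∑ v, q (2, v) * HH v) := by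
      intro q
      have hq : q = ∑ j : Fin 3 × G, Pi.single j (q j) := (Finset.univ_sum_single q).symm
      rw [show φ q = φ (∑ j : Fin 3 × G, Pi.single j (q j)) from by rw [← hq]]
      rw [map_sum]
      have hterm : ∀ j : Fin 3 × G, φ (Pi.single j (q j))
          = q j * φ ((Pi.single j (1:ℝ)) : (Fin 3 × G) → ℝ) := by
        intro j
        have hs : (Pi.single j (q j) : (Fin 3 × G) → ℝ)
            = q j • ((Pi.single j (1:ℝ)) : (Fin 3 × G) → ℝ) := by
          rw [← Pi.single_smul, smul_eq_mul, mul_one]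
        rw [hs, _root_.map_smul, smul_eq_mul]
      rw [Finset.sum_congr rfl fun j _ => hterm j, Fintype.sum_prod_type, Fin.sum_univ_three]
    -- point masses
    have hpoint : ∀ x y : G, FF x + GG y + HH (x - y) < c := by
      intro x y
      set wxy : (G × G) → ℝ := fun z => if z = (x, y) then 1 else 0 with hwxy
      have hwΔ : wxy ∈ Δ := by
        constructor
        · intro z; simp only [hwxy]; split <;> norm_num
        · simp [hwxy, Finset.sum_ite_eq']
      have hT0 : ∀ v : G, T wxy ((0 : Fin 3), v) = if v = x then (1:ℝ) else 0 := by
        intro v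
        rw [hTapp, if_pos rfl]
        by_cases hv : v = x
        · subst hv
          rw [Finset.sum_congr rfl (fun y' _ => show wxy (v, y') = if y' = y then (1:ℝ) else 0
              from by simp only [hwxy]; simp [Prod.mk.injEq])]
          simp
        · rw [Finset.sum_congr rfl (fun y' _ => show wxy (v, y') = 0
              from by simp only [hwxy]; simp [Prod.mk.injEq, hv])]
          simp [hv]
      have hT1 : ∀ v : G, T wxy ((1 : Fin 3), v) = if v = y then (1:ℝ) else 0 := by
        intro v
        rw [hTapp, if_neg (by decide), if_pos rfl]
        by_cases hv : v = y
        · subst hv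
          rw [Finset.sum_congr rfl (fun x' _ => show wxy (x', v) = if x' = x then (1:ℝ) else 0
              from by simp only [hwxy]; simp [Prod.mk.injEq])]
          simp
        · rw [Finset.sum_congr rfl (fun x' _ => show wxy (x', v) = 0
              from by simp only [hwxy]; simp [Prod.mk.injEq, hv])]
          simp [hv]
      have hT2 : ∀ v : G, T wxy ((2 : Fin 3), v) = if v = x - y then (1:ℝ) else 0 := by
        intro v
        rw [hTapp, if_neg (by decide), if_neg (by decide)]
        have hcond : ∀ x' : G, ((x', x' - v) = (x, y)) ↔ (x' = x ∧ v = x - y) := by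
          intro x'
          rw [Prod.mk.injEq]
          constructor
          · rintro ⟨hx, hy⟩
            subst hx
            refine ⟨rfl, ?_⟩
            rw [← hy]; abel
          · rintro ⟨hx, hy⟩
            subst hx; subst hy
            exact ⟨rfl, by abel⟩
        rw [Finset.sum_congr rfl (fun x' _ =>
          show wxy (x', x' - v) = if x' = x ∧ v = x - y then (1:ℝ) else 0
            from by simp only [hwxy]; rw [if_congr (hcond x') rfl rfl])]
        by_cases hv : v = x - y
        · simp [hv]
        · simp [hv]
      have hTeval : φ (T wxy) = FF x + GG y + HH (x - y) := by
        rw [heval]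
        simp only [hT0, hT1, hT2]
        simp [ite_mul]
      have := hφ1 (T wxy) ⟨wxy, hwΔ, rfl⟩
      rw [hTeval] at this
      exact this
    -- evaluate φ at P
    have hPeval : φ P = (∑ v, p₁ v * FF v) + (∑ v, p₂ v * GG v) + (∑ v, p₃ v * HH v) := by
      rw [heval]
      have e0 : ∀ v : G, P ((0 : Fin 3), v) = p₁ v := fun v => if_pos rfl
      have e1 : ∀ v : G, P ((1 : Fin 3), v) = p₂ v := by
        intro v
        show (if ((1:Fin 3) = 0) then p₁ v else if ((1:Fin 3) = 1) then p₂ v else p₃ v) = p₂ v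
        rw [if_neg (by decide), if_pos rfl]
      have e2 : ∀ v : G, P ((2 : Fin 3), v) = p₃ v := by
        intro v
        show (if ((2:Fin 3) = 0) then p₁ v else if ((2:Fin 3) = 1) then p₂ v else p₃ v) = p₃ v
        rw [if_neg (by decide), if_neg (by decide)]
      simp only [e0, e1, e2]
    -- contradiction via the dual inequality
    have hdual := dual_ineq p₁ p₂ p₃ h₁ h₂ h₃ hL1
      (fun v => c - FF v) (fun v => -GG v) (fun v => -HH v)
      (fun x y => by have := hpoint x y; linarith)
    have c1 : (∑ v, p₁ v * (c - FF v)) = c - ∑ v, p₁ v * FF v := by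
      rw [show (∑ v, p₁ v * (c - FF v)) = ∑ v, (p₁ v * c - p₁ v * FF v) from
        Finset.sum_congr rfl fun v _ => by ring]
      rw [Finset.sum_sub_distrib, ← Finset.sum_mul, h₁.2, one_mul]
    have c2 : (∑ v, p₂ v * (-GG v)) = -∑ v, p₂ v * GG v := by
      rw [show (∑ v, p₂ v * (-GG v)) = ∑ v, -(p₂ v * GG v) from
        Finset.sum_congr rfl fun v _ => by ring]
      rw [Finset.sum_neg_distrib]
    have c3 : (∑ v, p₃ v * (-HH v)) = -∑ v, p₃ v * HH v := by
      rw [show (∑ v, p₃ v * (-HH v)) = ∑ v, -(p₃ v * HH v) from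
        Finset.sum_congr rfl fun v _ => by ring]
      rw [Finset.sum_neg_distrib]
    rw [c1, c2, c3] at hdual
    rw [hPeval] at hφ2
    linarith
  obtain ⟨w, hwΔ, hTw⟩ := key
  refine ⟨w, hwΔ.1, hwΔ.2, ?_, ?_, ?_⟩
  · intro x
    have h5 := congrFun hTw ((0 : Fin 3), x)
    rw [hTapp, if_pos rfl] at h5
    rw [h5]
    exact if_pos rfl
  · intro y
    have h5 := congrFun hTw ((1 : Fin 3), y)
    rw [hTapp, if_neg (by decide), if_pos rfl] at h5
    rw [h5]
    show (if ((1:Fin 3) = 0) then p₁ y else if ((1:Fin 3) = 1) then p₂ y else p₃ y) = p₂ y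
    rw [if_neg (by decide), if_pos rfl]
  · intro d
    have h5 := congrFun hTw ((2 : Fin 3), d)
    rw [hTapp, if_neg (by decide), if_neg (by decide)] at h5
    rw [h5]
    show (if ((2:Fin 3) = 0) then p₁ d else if ((2:Fin 3) = 1) then p₂ d else p₃ d) = p₃ d
    rw [if_neg (by decide), if_neg (by decide)]


end Statement15Aux

/-- Let `H` be a finite abelian group and let `p₁, p₂, p₃` be probability
distributions on `H` with `‖p₁ - u_H‖₁ + ‖p₂ - u_H‖₁ + ‖p₃ - u_H‖₁ ≤ 1`. Then there is a
coupling `(X, Y)` with `X ~ p₁`, `Y ~ p₂` and `X - Y ~ p₃`. -/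
theorem statement15 {H : Type*} [AddCommGroup H] [Fintype H] [DecidableEq H]
    (p₁ p₂ p₃ : H → ℝ)
    (h₁ : (∀ x, 0 ≤ p₁ x) ∧ ∑ x, p₁ x = 1)
    (h₂ : (∀ x, 0 ≤ p₂ x) ∧ ∑ x, p₂ x = 1)
    (h₃ : (∀ x, 0 ≤ p₃ x) ∧ ∑ x, p₃ x = 1)
    (hL1 : (∑ x, |p₁ x - ((Fintype.card H : ℝ))⁻¹|) +
           (∑ x, |p₂ x - ((Fintype.card H : ℝ))⁻¹|) +
           (∑ x, |p₃ x - ((Fintype.card H : ℝ))⁻¹|) ≤ 1) :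
    ∃ w : H × H → ℝ, (∀ z, 0 ≤ w z) ∧ (∑ z, w z = 1) ∧
      (∀ x, ∑ y, w (x, y) = p₁ x) ∧
      (∀ y, ∑ x, w (x, y) = p₂ y) ∧
      (∀ d, ∑ x, w (x, x - d) = p₃ d) := by
  exact Statement15Aux.coupling_exists p₁ p₂ p₃ h₁ h₂ h₃ hL1

end
end

section
/- Let G be a torsion-free abelian group, and let X, Y be random variables taking values in finite subsets of G. Then d_ent(X, 2Y) ≤ 5 d_ent(X, Y), where 2Y denotes the random variable Y + Y (the doubling map applied to Y). -/
open Finset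

noncomputable section

/-- `AddMonoid.IsTorsionFree G`: no nonzero element of `G` has finite additive order
(the Mathlib definition of December 2024, since removed). -/
def AddMonoid.IsTorsionFree (G : Type*) [AddMonoid G] : Prop :=
  ∀ g : G, g ≠ 0 → ¬IsOfFinAddOrder g

namespace S16
variable {α β γ δ Ω : Type*}



/-- total mass of a finsupp -/
def mass (w : α →₀ ℝ) : ℝ := ∑ x ∈ w.support, w x


lemma mapDomain_eval [DecidableEq β] (π : α → β) (w : α →₀ ℝ) (b : β) :
    Finsupp.mapDomain π w b = ∑ ω ∈ w.support, if π ω = b then w ω else 0 := by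
  rw [Finsupp.mapDomain, Finsupp.sum_apply, Finsupp.sum]
  exact Finset.sum_congr rfl fun ω _ => Finsupp.single_apply

lemma mapDomain_nonneg (π : α → β) {w : α →₀ ℝ} (hw : ∀ x, 0 ≤ w x) :
    ∀ b, 0 ≤ Finsupp.mapDomain π w b := by
  classical
  intro b
  rw [mapDomain_eval]
  exact Finset.sum_nonneg fun ω _ => by by_cases h : π ω = b <;> simp [h, hw ω]

lemma mass_mapDomain (π : α → β) (w : α →₀ ℝ) :
    mass (Finsupp.mapDomain π w) = mass w := by
  have : (Finsupp.mapDomain π w).sum (fun _ c => c) = w.sum (fun _ c => c) :=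
    Finsupp.sum_mapDomain_index (fun _ => rfl) (fun _ _ _ => rfl)
  simpa [mass, Finsupp.sum] using this

lemma le_mapDomain_apply (π : α → β) {w : α →₀ ℝ} (hw : ∀ x, 0 ≤ w x) {ω : α}
    (hω : ω ∈ w.support) : w ω ≤ Finsupp.mapDomain π w (π ω) := by
  classical
  rw [mapDomain_eval]
  have : w ω = if π ω = π ω then w ω else 0 := by simp
  rw [this]
  exact Finset.single_le_sum (f := fun t => if π t = π ω then w t else 0)
    (fun t _ => by by_cases h : π t = π ω <;> simp [h, hw t]) hω

lemma pos_mapDomain (π : α → β) {w : α →₀ ℝ} (hw : ∀ x, 0 ≤ w x) {ω : α}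
    (hω : ω ∈ w.support) : 0 < Finsupp.mapDomain π w (π ω) :=
  lt_of_lt_of_le (lt_of_le_of_ne (hw ω) (Ne.symm (Finsupp.mem_support_iff.mp hω)))
    (le_mapDomain_apply π hw hω)

/-- entropy of a pushforward as a sum over the base support -/
lemma ent_mapDomain_sum (π : α → β) (w : α →₀ ℝ) :
    ent (Finsupp.mapDomain π w)
      = ∑ ω ∈ w.support, -(w ω * Real.log (Finsupp.mapDomain π w (π ω))) := by
  classical
  set m := Finsupp.mapDomain π w with hm
  have hsupp : m.support ⊆ w.support.image π := Finsupp.mapDomain_support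
  have h1 : ent m = ∑ b ∈ w.support.image π, Real.negMulLog (m b) := by
    refine Finset.sum_subset hsupp (fun b _ hb => ?_)
    rw [Finsupp.notMem_support_iff.mp hb, Real.negMulLog_zero]
  rw [h1]
  have h2 : ∀ b ∈ w.support.image π,
      Real.negMulLog (m b) = ∑ ω ∈ w.support with π ω = b, -(w ω * Real.log (m b)) := by
    intro b _
    have hmb : m b = ∑ ω ∈ w.support with π ω = b, w ω := by
      rw [hm, mapDomain_eval, Finset.sum_filter]
    rw [Real.negMulLog, hmb, neg_mul, Finset.sum_mul, ← Finset.sum_neg_distrib]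
  rw [Finset.sum_congr rfl h2]
  have h3 : ∀ b ∈ w.support.image π, ∀ ω ∈ w.support.filter (fun ω => π ω = b),
      -(w ω * Real.log (m b)) = -(w ω * Real.log (m (π ω))) := by
    intro b _ ω hω
    rw [(Finset.mem_filter.mp hω).2]
  rw [Finset.sum_congr rfl (fun b hb => Finset.sum_congr rfl (h3 b hb))]
  exact Finset.sum_fiberwise_of_maps_to (fun ω hω => Finset.mem_image_of_mem π hω) _

lemma ent_mapDomain_injective {π : α → β} (hπ : Function.Injective π) (w : α →₀ ℝ) :
    ent (Finsupp.mapDomain π w) = ent w := by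
  rw [ent_mapDomain_sum]
  refine Finset.sum_congr rfl fun ω _ => ?_
  rw [Finsupp.mapDomain_apply hπ, Real.negMulLog]
  ring

/-- marginal domination: the sum of a row of a joint distribution is at most the marginal -/
lemma row_le_marginal [DecidableEq β] {m : (α × β) →₀ ℝ} (hm : ∀ u, 0 ≤ m u)
    (A : Finset α) (b : β) :
    ∑ a ∈ A, m (a, b) ≤ Finsupp.mapDomain (fun u : α × β => u.2) m b := by
  classical
  rw [mapDomain_eval]
  have hinj : Function.Injective (fun a : α => (a, b)) := fun a a' h => (Prod.mk.injEq _ _ _ _).mp h |>.1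
  rw [← Finset.sum_image (f := m) (g := fun a : α => (a, b))
    (fun a _ a' _ h => hinj h)]
  have h1 : ∑ u ∈ A.image (fun a => (a, b)), m u
      = ∑ u ∈ A.image (fun a => (a, b)), (if u.2 = b then m u else 0) := by
    refine Finset.sum_congr rfl fun u hu => ?_
    obtain ⟨a, _, rfl⟩ := Finset.mem_image.mp hu
    simp
  rw [h1]
  have h2 : ∑ u ∈ A.image (fun a => (a, b)), (if u.2 = b then m u else 0)
      ≤ ∑ u ∈ A.image (fun a => (a, b)) ∪ m.support, (if u.2 = b then m u else 0) := by
    refine Finset.sum_le_sum_of_subset_of_nonneg Finset.subset_union_left fun u _ _ => ?_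
    by_cases h : u.2 = b <;> simp [h, hm u]
  refine h2.trans (le_of_eq ?_)
  refine (Finset.sum_subset Finset.subset_union_right fun u _ hu => ?_).symm
  rw [Finsupp.notMem_support_iff.mp hu]
  simp

theorem submod (r : α × β × γ →₀ ℝ) (hr : ∀ z, 0 ≤ r z) (hmass : mass r = 1) :
    ent r + ent (Finsupp.mapDomain (fun z : α × β × γ => z.2.1) r)
      ≤ ent (Finsupp.mapDomain (fun z : α × β × γ => (z.1, z.2.1)) r)
        + ent (Finsupp.mapDomain (fun z : α × β × γ => z.2) r) := by
  classical
  set m12 := Finsupp.mapDomain (fun z : α × β × γ => (z.1, z.2.1)) r with hm12def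
  set m23 := Finsupp.mapDomain (fun z : α × β × γ => z.2) r with hm23def
  set m2 := Finsupp.mapDomain (fun z : α × β × γ => z.2.1) r with hm2def
  have h12n : ∀ u, 0 ≤ m12 u := mapDomain_nonneg _ hr
  have h23n : ∀ u, 0 ≤ m23 u := mapDomain_nonneg _ hr
  have h2n : ∀ u, 0 ≤ m2 u := mapDomain_nonneg _ hr
  have hcomp1 : m2 = Finsupp.mapDomain (fun u : α × β => u.2) m12 := by
    rw [hm2def, hm12def, ← Finsupp.mapDomain_comp]; rfl
  have hcomp2 : m2 = Finsupp.mapDomain (fun v : β × γ => v.1) m23 := by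
    rw [hm2def, hm23def, ← Finsupp.mapDomain_comp]; rfl
  have hrpos : ∀ z ∈ r.support, 0 < r z := fun z hz =>
    lt_of_le_of_ne (hr z) (Ne.symm (Finsupp.mem_support_iff.mp hz))
  have p12 : ∀ z ∈ r.support, 0 < m12 (z.1, z.2.1) := fun z hz =>
    pos_mapDomain (fun z : α × β × γ => (z.1, z.2.1)) hr hz
  have p23 : ∀ z ∈ r.support, 0 < m23 z.2 := fun z hz =>
    pos_mapDomain (fun z : α × β × γ => z.2) hr hz
  have p2 : ∀ z ∈ r.support, 0 < m2 z.2.1 := fun z hz =>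
    pos_mapDomain (fun z : α × β × γ => z.2.1) hr hz
  -- the key Gibbs-type estimate
  set F : α × β × γ → ℝ := fun z => m12 (z.1, z.2.1) * m23 z.2 / m2 z.2.1 with hF
  have main : ∑ z ∈ r.support, F z ≤ 1 := by
    set A : Finset α := r.support.image Prod.fst with hA
    have hsub : r.support ⊆ A ×ˢ m23.support := by
      intro z hz
      rw [Finset.mem_product]
      exact ⟨Finset.mem_image_of_mem _ hz, Finsupp.mem_support_iff.mpr (p23 z hz).ne'⟩
    have hFn : ∀ z, 0 ≤ F z := fun z => by
      rw [hF]; exact div_nonneg (mul_nonneg (h12n _) (h23n _)) (h2n _)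
    have step1 : ∑ z ∈ r.support, F z ≤ ∑ z ∈ A ×ˢ m23.support, F z :=
      Finset.sum_le_sum_of_subset_of_nonneg hsub fun z _ _ => hFn z
    refine step1.trans ?_
    rw [Finset.sum_product]
    rw [Finset.sum_comm]
    have step2 : ∀ bc ∈ m23.support,
        ∑ a ∈ A, F (a, bc) ≤ m23 bc := by
      intro bc hbc
      have : ∑ a ∈ A, F (a, bc) = (∑ a ∈ A, m12 (a, bc.1)) * (m23 bc / m2 bc.1) := by
        rw [Finset.sum_mul]
        exact Finset.sum_congr rfl fun a _ => by rw [hF]; ring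
      rw [this]
      have hrow : ∑ a ∈ A, m12 (a, bc.1) ≤ m2 bc.1 := by
        rw [hcomp1]; exact row_le_marginal h12n A bc.1
      have h2pos : 0 < m2 bc.1 := by
        rw [hcomp2]
        exact pos_mapDomain (fun v : β × γ => v.1) h23n hbc
      calc (∑ a ∈ A, m12 (a, bc.1)) * (m23 bc / m2 bc.1)
          ≤ m2 bc.1 * (m23 bc / m2 bc.1) := by
            exact mul_le_mul_of_nonneg_right hrow (div_nonneg (h23n _) (h2n _))
        _ = m23 bc := by field_simp
    calc ∑ bc ∈ m23.support, ∑ a ∈ A, F (a, bc)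
        ≤ ∑ bc ∈ m23.support, m23 bc := Finset.sum_le_sum step2
      _ = 1 := by rw [← hmass, hm23def]; exact (mass_mapDomain _ r)
  -- entropy expansions
  have hE12 : ent m12 = ∑ z ∈ r.support, -(r z * Real.log (m12 (z.1, z.2.1))) :=
    ent_mapDomain_sum _ r
  have hE23 : ent m23 = ∑ z ∈ r.support, -(r z * Real.log (m23 z.2)) :=
    ent_mapDomain_sum _ r
  have hE2 : ent m2 = ∑ z ∈ r.support, -(r z * Real.log (m2 z.2.1)) :=
    ent_mapDomain_sum _ r
  have hEr : ent r = ∑ z ∈ r.support, -(r z * Real.log (r z)) := by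
    simp [ent, Real.negMulLog, neg_mul]
  -- per-point inequality
  have perz : ∀ z ∈ r.support,
      r z - F z ≤ -(r z * Real.log (m12 (z.1, z.2.1))) + -(r z * Real.log (m23 z.2))
        - -(r z * Real.log (r z)) - -(r z * Real.log (m2 z.2.1)) := by
    intro z hz
    have ha := hrpos z hz
    have hB := p12 z hz
    have hC := p23 z hz
    have hd := p2 z hz
    have ht : 0 < m12 (z.1, z.2.1) * m23 z.2 / (r z * m2 z.2.1) := by positivity
    have hlog := Real.log_le_sub_one_of_pos ht
    rw [Real.log_div (by positivity) (by positivity),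
        Real.log_mul hB.ne' hC.ne', Real.log_mul ha.ne' hd.ne'] at hlog
    have hmul := mul_le_mul_of_nonneg_left hlog (le_of_lt ha)
    have hca : r z * (m12 (z.1, z.2.1) * m23 z.2 / (r z * m2 z.2.1)) = F z := by
      rw [hF]; field_simp
    have e2 : r z * (m12 (z.1, z.2.1) * m23 z.2 / (r z * m2 z.2.1) - 1) = F z - r z := by
      rw [mul_sub, mul_one, hca]
    have e1 : -(r z * Real.log (m12 (z.1, z.2.1))) + -(r z * Real.log (m23 z.2))
        - -(r z * Real.log (r z)) - -(r z * Real.log (m2 z.2.1))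
        = -(r z * (Real.log (m12 (z.1, z.2.1)) + Real.log (m23 z.2)
            - (Real.log (r z) + Real.log (m2 z.2.1)))) := by ring
    rw [e1]
    linarith [hmul, e2]
  have hsum : ∑ z ∈ r.support, (r z - F z)
      ≤ ent m12 + ent m23 - ent r - ent m2 := by
    rw [hE12, hE23, hE2, hEr, ← Finset.sum_add_distrib, ← Finset.sum_sub_distrib,
      ← Finset.sum_sub_distrib]
    exact Finset.sum_le_sum perz
  rw [Finset.sum_sub_distrib] at hsum
  have : (1:ℝ) - ∑ z ∈ r.support, F z ≤ ent m12 + ent m23 - ent r - ent m2 := by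
    rw [← hmass]; exact hsum
  linarith [main, this]

@[simp] lemma prodPMF_apply (p : α →₀ ℝ) (q : β →₀ ℝ) (z : α × β) :
    prodPMF p q z = p z.1 * q z.2 := rfl

lemma prodPMF_support (p : α →₀ ℝ) (q : β →₀ ℝ) :
    (prodPMF p q).support = p.support ×ˢ q.support := by
  ext z
  simp [Finsupp.mem_support_iff, Finset.mem_product, mul_ne_zero_iff]

lemma mass_prodPMF (p : α →₀ ℝ) (q : β →₀ ℝ) :
    mass (prodPMF p q) = mass p * mass q := by
  rw [mass, prodPMF_support, Finset.sum_product]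
  simp only [prodPMF_apply]
  rw [mass, mass, Finset.sum_mul]
  exact Finset.sum_congr rfl fun a _ => by rw [Finset.mul_sum]

lemma prodPMF_nonneg {p : α →₀ ℝ} {q : β →₀ ℝ} (hp : ∀ x, 0 ≤ p x) (hq : ∀ x, 0 ≤ q x) :
    ∀ z, 0 ≤ prodPMF p q z := fun z => mul_nonneg (hp z.1) (hq z.2)

lemma isPMF_prodPMF {p : α →₀ ℝ} {q : β →₀ ℝ} (hp : IsPMF p) (hq : IsPMF q) :
    IsPMF (prodPMF p q) := by
  refine ⟨prodPMF_nonneg hp.1 hq.1, ?_⟩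
  have := mass_prodPMF p q
  rw [show mass p = 1 from hp.2, show mass q = 1 from hq.2, mul_one] at this
  exact this

lemma ent_prodPMF {p : α →₀ ℝ} {q : β →₀ ℝ} (hp : IsPMF p) (hq : IsPMF q) :
    ent (prodPMF p q) = ent p + ent q := by
  rw [ent, prodPMF_support, Finset.sum_product]
  have : ∀ a ∈ p.support, ∀ b ∈ q.support,
      Real.negMulLog (prodPMF p q (a, b))
        = q b * Real.negMulLog (p a) + p a * Real.negMulLog (q b) := by
    intro a _ b _
    rw [prodPMF_apply, Real.negMulLog_mul]
  rw [Finset.sum_congr rfl fun a ha => Finset.sum_congr rfl (this a ha)]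
  have expand : ∀ a ∈ p.support,
      ∑ b ∈ q.support, (q b * Real.negMulLog (p a) + p a * Real.negMulLog (q b))
        = Real.negMulLog (p a) + p a * ent q := by
    intro a _
    rw [Finset.sum_add_distrib, ← Finset.sum_mul, ← Finset.mul_sum]
    rw [show (∑ b ∈ q.support, q b) = 1 from hq.2]
    rw [one_mul, ent]
  rw [Finset.sum_congr rfl expand, Finset.sum_add_distrib, ← Finset.sum_mul,
    show (∑ a ∈ p.support, p a) = 1 from hp.2, one_mul, ent]
  rfl

/-- pushforward of a product under a product map -/
lemma mapDomain_prodMap (φ : α → γ) (ψ : β → δ) (p : α →₀ ℝ) (q : β →₀ ℝ) :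
    Finsupp.mapDomain (Prod.map φ ψ) (prodPMF p q)
      = prodPMF (Finsupp.mapDomain φ p) (Finsupp.mapDomain ψ q) := by
  classical
  ext z
  rw [mapDomain_eval, prodPMF_support, Finset.sum_product, prodPMF_apply,
    mapDomain_eval, mapDomain_eval, Finset.sum_mul]
  refine Finset.sum_congr rfl fun a _ => ?_
  rw [Finset.mul_sum]
  refine Finset.sum_congr rfl fun b _ => ?_
  by_cases h1 : φ a = z.1 <;> by_cases h2 : ψ b = z.2 <;>
    simp [Prod.map, Prod.ext_iff, h1, h2]

/-- first marginal of a product -/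
lemma mapDomain_fst_prodPMF (p : α →₀ ℝ) {q : β →₀ ℝ} (hq : mass q = 1) :
    Finsupp.mapDomain Prod.fst (prodPMF p q) = p := by
  classical
  ext a
  rw [mapDomain_eval, prodPMF_support, Finset.sum_product]
  have : ∀ s ∈ p.support, (∑ t ∈ q.support, if (s, t).1 = a then prodPMF p q (s, t) else 0)
      = if s = a then p s else 0 := by
    intro s _
    by_cases h : s = a
    · subst h
      have h2 : (∑ t ∈ q.support, if (s, t).1 = s then prodPMF p q (s, t) else 0)
          = ∑ t ∈ q.support, p s * q t :=
        Finset.sum_congr rfl fun t _ => by simp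
      rw [h2, ← Finset.mul_sum, show (∑ t ∈ q.support, q t) = 1 from hq, mul_one, if_pos rfl]
    · simp [h]
  rw [Finset.sum_congr rfl this, Finset.sum_ite_eq' p.support a p]
  by_cases h : a ∈ p.support
  · simp [h]
  · simp [h, Finsupp.notMem_support_iff.mp h]

lemma mapDomain_snd_prodPMF {p : α →₀ ℝ} (q : β →₀ ℝ) (hp : mass p = 1) :
    Finsupp.mapDomain Prod.snd (prodPMF p q) = q := by
  classical
  ext b
  rw [mapDomain_eval, prodPMF_support, Finset.sum_product]
  have : ∀ s ∈ p.support, (∑ t ∈ q.support, if (s, t).2 = b then prodPMF p q (s, t) else 0)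
      = p s * (if b ∈ q.support then q b else 0) := by
    intro s _
    have h2 : (∑ t ∈ q.support, if (s, t).2 = b then prodPMF p q (s, t) else 0)
        = ∑ t ∈ q.support, p s * (if t = b then q t else 0) :=
      Finset.sum_congr rfl fun t _ => by by_cases h : t = b <;> simp [h]
    rw [h2, ← Finset.mul_sum, Finset.sum_ite_eq' q.support b q]
  rw [Finset.sum_congr rfl this, ← Finset.sum_mul,
    show (∑ i ∈ p.support, p i) = 1 from hp, one_mul]
  by_cases h : b ∈ q.support
  · simp [h]
  · simp [h, Finsupp.notMem_support_iff.mp h]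

/-- entropy of the random variable `f` built on a base distribution `w` -/
def J (w : Ω →₀ ℝ) (f : Ω → α) : ℝ := ent (Finsupp.mapDomain f w)

lemma J_eq_of_comp (w : Ω →₀ ℝ) {e : α → β} (he : Function.Injective e) (g : Ω → α) :
    J w (fun ω => e (g ω)) = J w g := by
  rw [J, J, show (fun ω => e (g ω)) = e ∘ g from rfl, Finsupp.mapDomain_comp,
    ent_mapDomain_injective he]

lemma J_eq_of_comp' (w : Ω →₀ ℝ) {e : α → β} (he : Function.Injective e) (g : Ω → α)
    {f : Ω → β} (hf : ∀ ω, f ω = e (g ω)) : J w f = J w g := by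
  rw [show f = fun ω => e (g ω) from funext hf]
  exact J_eq_of_comp w he g

lemma ent_unit (w : Ω →₀ ℝ) (hmass : mass w = 1) :
    ent (Finsupp.mapDomain (fun _ : Ω => ()) w) = 0 := by
  classical
  have hval : ∀ x : Unit, Finsupp.mapDomain (fun _ : Ω => ()) w x = 1 := by
    intro x
    rw [mapDomain_eval]
    simpa [mass] using hmass
  rw [ent]
  refine Finset.sum_eq_zero fun x _ => ?_
  rw [hval x, Real.negMulLog_one]

/-- conditional-entropy monotonicity instance of submodularity:
`H(f, h) + H(ρ∘h) ≤ H(f, ρ∘h) + H(h)`. -/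
lemma condReduce (w : Ω →₀ ℝ) (hw : ∀ x, 0 ≤ w x) (hmass : mass w = 1)
    (f : Ω → α) (h : Ω → γ) (ρ : γ → β) :
    J w (fun ω => (f ω, h ω)) + J w (fun ω => ρ (h ω))
      ≤ J w (fun ω => (f ω, ρ (h ω))) + J w h := by
  have hs := submod (Finsupp.mapDomain (fun ω => (f ω, (ρ (h ω), h ω))) w)
    (mapDomain_nonneg _ hw) (by rw [mass_mapDomain]; exact hmass)
  have e1 : ent (Finsupp.mapDomain (fun ω => (f ω, (ρ (h ω), h ω))) w)
      = J w (fun ω => (f ω, h ω)) := by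
    rw [show (fun ω => (f ω, (ρ (h ω), h ω)))
        = (fun u : α × γ => (u.1, (ρ u.2, u.2))) ∘ (fun ω => (f ω, h ω)) from rfl,
      Finsupp.mapDomain_comp, ent_mapDomain_injective, J]
    intro u u' huu
    have h1 := congrArg Prod.fst huu
    have h2 := congrArg (fun v => v.2.2) huu
    exact Prod.ext h1 h2
  have e2 : Finsupp.mapDomain (fun z : α × β × γ => z.2.1)
        (Finsupp.mapDomain (fun ω => (f ω, (ρ (h ω), h ω))) w)
      = Finsupp.mapDomain (fun ω => ρ (h ω)) w := by
    rw [← Finsupp.mapDomain_comp]; rfl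
  have e3 : Finsupp.mapDomain (fun z : α × β × γ => (z.1, z.2.1))
        (Finsupp.mapDomain (fun ω => (f ω, (ρ (h ω), h ω))) w)
      = Finsupp.mapDomain (fun ω => (f ω, ρ (h ω))) w := by
    rw [← Finsupp.mapDomain_comp]; rfl
  have e4 : ent (Finsupp.mapDomain (fun z : α × β × γ => z.2)
        (Finsupp.mapDomain (fun ω => (f ω, (ρ (h ω), h ω))) w))
      = J w h := by
    rw [← Finsupp.mapDomain_comp,
      show (fun z : α × β × γ => z.2) ∘ (fun ω => (f ω, (ρ (h ω), h ω)))
        = (fun c : γ => (ρ c, c)) ∘ h from rfl,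
      Finsupp.mapDomain_comp, ent_mapDomain_injective, J]
    intro c c' hcc
    exact congrArg Prod.snd hcc
  rw [e1, e2, e3, e4] at hs
  exact hs

/-- subadditivity instance -/
lemma J_pair_le (w : Ω →₀ ℝ) (hw : ∀ x, 0 ≤ w x) (hmass : mass w = 1)
    (f : Ω → α) (g : Ω → β) :
    J w (fun ω => (f ω, g ω)) ≤ J w f + J w g := by
  have hs := submod (Finsupp.mapDomain (fun ω => (f ω, ((), g ω))) w)
    (mapDomain_nonneg _ hw) (by rw [mass_mapDomain]; exact hmass)
  have e1 : ent (Finsupp.mapDomain (fun ω => (f ω, ((), g ω))) w)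
      = J w (fun ω => (f ω, g ω)) := by
    rw [show (fun ω => (f ω, ((), g ω)))
        = (fun u : α × β => (u.1, ((), u.2))) ∘ (fun ω => (f ω, g ω)) from rfl,
      Finsupp.mapDomain_comp, ent_mapDomain_injective, J]
    intro u u' huu
    have h1 := congrArg Prod.fst huu
    have h2 := congrArg (fun v : α × Unit × β => v.2.2) huu
    exact Prod.ext h1 h2
  have e2 : ent (Finsupp.mapDomain (fun z : α × Unit × β => z.2.1)
        (Finsupp.mapDomain (fun ω => (f ω, ((), g ω))) w)) = 0 := by
    rw [← Finsupp.mapDomain_comp]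
    exact ent_unit w hmass
  have e3 : ent (Finsupp.mapDomain (fun z : α × Unit × β => (z.1, z.2.1))
        (Finsupp.mapDomain (fun ω => (f ω, ((), g ω))) w)) = J w f := by
    rw [← Finsupp.mapDomain_comp,
      show (fun z : α × Unit × β => (z.1, z.2.1)) ∘ (fun ω => (f ω, ((), g ω)))
        = (fun s : α => (s, ())) ∘ f from rfl,
      Finsupp.mapDomain_comp, ent_mapDomain_injective, J]
    intro s s' hss
    exact congrArg Prod.fst hss
  have e4 : ent (Finsupp.mapDomain (fun z : α × Unit × β => z.2)
        (Finsupp.mapDomain (fun ω => (f ω, ((), g ω))) w)) = J w g := by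
    rw [← Finsupp.mapDomain_comp,
      show (fun z : α × Unit × β => z.2) ∘ (fun ω => (f ω, ((), g ω)))
        = (fun t : β => ((), t)) ∘ g from rfl,
      Finsupp.mapDomain_comp, ent_mapDomain_injective, J]
    intro t t' htt
    exact congrArg Prod.snd htt
  rw [e1, e2, e3, e4] at hs
  linarith


end S16

theorem statement16 {G : Type*} [AddCommGroup G] (hG : AddMonoid.IsTorsionFree G)
    (p q : G →₀ ℝ) (hp : IsPMF p) (hq : IsPMF q) :
    dEnt p (Finsupp.mapDomain (fun g : G => g + g) q) ≤ 5 * dEnt p q := by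
  classical
  obtain ⟨hp1, hp2⟩ := hp
  obtain ⟨hq1, hq2⟩ := hq
  -- torsion-freeness gives that halving is well-defined (doubling is injective)
  have hhalf : ∀ a b : G, a + a = b + b → a = b := by
    intro a b hab
    by_contra hne
    refine hG (a - b) (sub_ne_zero.mpr hne) ?_
    rw [isOfFinAddOrder_iff_nsmul_eq_zero]
    refine ⟨2, two_pos, ?_⟩
    rw [two_nsmul]
    calc (a - b) + (a - b) = (a + a) - (b + b) := by abel
      _ = 0 := by rw [hab]; abel
  set Q := prodPMF q q with hQ
  set w := prodPMF p Q with hwdef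
  have hqpmf : IsPMF q := ⟨hq1, hq2⟩
  have hppmf : IsPMF p := ⟨hp1, hp2⟩
  have hQpmf : IsPMF Q := S16.isPMF_prodPMF hqpmf hqpmf
  have hwpmf : IsPMF w := S16.isPMF_prodPMF hppmf hQpmf
  have hw1 : ∀ x, 0 ≤ w x := hwpmf.1
  have hw2 : S16.mass w = 1 := hwpmf.2
  -- marginal identities
  have hMx : Finsupp.mapDomain Prod.fst w = p :=
    S16.mapDomain_fst_prodPMF p hQpmf.2
  have hMsnd : Finsupp.mapDomain Prod.snd w = Q :=
    S16.mapDomain_snd_prodPMF Q hp2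
  have hMxy : Finsupp.mapDomain (fun ω : G × G × G => (ω.1, ω.2.1)) w = prodPMF p q := by
    rw [hwdef, show (fun ω : G × G × G => (ω.1, ω.2.1)) = Prod.map id Prod.fst from rfl,
      S16.mapDomain_prodMap, Finsupp.mapDomain_id, hQ,
      S16.mapDomain_fst_prodPMF q hq2]
  have hMxz : Finsupp.mapDomain (fun ω : G × G × G => (ω.1, ω.2.2)) w = prodPMF p q := by
    rw [hwdef, show (fun ω : G × G × G => (ω.1, ω.2.2)) = Prod.map id Prod.snd from rfl,
      S16.mapDomain_prodMap, Finsupp.mapDomain_id, hQ,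
      S16.mapDomain_snd_prodPMF q hq2]
  have hMy : Finsupp.mapDomain (fun ω : G × G × G => ω.2.1) w = q := by
    rw [show (fun ω : G × G × G => ω.2.1) = Prod.fst ∘ Prod.snd from rfl,
      Finsupp.mapDomain_comp, hMsnd, hQ, S16.mapDomain_fst_prodPMF q hq2]
  have hMz : Finsupp.mapDomain (fun ω : G × G × G => ω.2.2) w = q := by
    rw [show (fun ω : G × G × G => ω.2.2) = Prod.snd ∘ Prod.snd from rfl,
      Finsupp.mapDomain_comp, hMsnd, hQ, S16.mapDomain_snd_prodPMF q hq2]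
  -- entropy values of the basic random variables
  have Ja : S16.J w (fun ω : G × G × G => ω.1) = ent p := by
    rw [S16.J]; exact congrArg ent hMx
  have Jb : S16.J w (fun ω : G × G × G => ω.2.1) = ent q := by
    rw [S16.J]; exact congrArg ent hMy
  have Jz : S16.J w (fun ω : G × G × G => ω.2.2) = ent q := by
    rw [S16.J]; exact congrArg ent hMz
  have Jsnd : S16.J w (fun ω : G × G × G => ω.2) = ent q + ent q := by
    rw [S16.J]
    have h1 : ent (Finsupp.mapDomain Prod.snd w) = ent q + ent q := by
      rw [hMsnd, hQ, S16.ent_prodPMF hqpmf hqpmf]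
    exact h1
  have Jxy : S16.J w (fun ω : G × G × G => (ω.1, ω.2.1)) = ent p + ent q := by
    rw [S16.J, hMxy, S16.ent_prodPMF hppmf hqpmf]
  have Jid : S16.J w (fun ω : G × G × G => ω) = ent p + (ent q + ent q) := by
    rw [S16.J, show Finsupp.mapDomain (fun ω : G × G × G => ω) w = w from Finsupp.mapDomain_id,
      hwdef, S16.ent_prodPMF hppmf hQpmf, hQ, S16.ent_prodPMF hqpmf hqpmf]
  have JD : S16.J w (fun ω : G × G × G => ω.1 - ω.2.1) = ent (subDist p q) := by
    rw [S16.J, show (fun ω : G × G × G => ω.1 - ω.2.1)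
        = (fun v : G × G => v.1 - v.2) ∘ (fun ω : G × G × G => (ω.1, ω.2.1)) from rfl,
      Finsupp.mapDomain_comp, hMxy, subDist]
  have JDz : S16.J w (fun ω : G × G × G => ω.1 - ω.2.2) = ent (subDist p q) := by
    rw [S16.J, show (fun ω : G × G × G => ω.1 - ω.2.2)
        = (fun v : G × G => v.1 - v.2) ∘ (fun ω : G × G × G => (ω.1, ω.2.2)) from rfl,
      Finsupp.mapDomain_comp, hMxz, subDist]
  -- the distribution of X - 2Y
  have hdblinj : Function.Injective (fun g : G => g + g) := fun g g' h => hhalf g g' h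
  have hent2q : ent (Finsupp.mapDomain (fun g : G => g + g) q) = ent q :=
    S16.ent_mapDomain_injective hdblinj q
  have hT : ent (subDist p (Finsupp.mapDomain (fun g : G => g + g) q))
      = S16.J w (fun ω : G × G × G => ω.1 - (ω.2.1 + ω.2.1)) := by
    rw [subDist]
    have h1 : prodPMF p (Finsupp.mapDomain (fun g : G => g + g) q)
        = Finsupp.mapDomain (Prod.map id (fun g : G => g + g)) (prodPMF p q) := by
      rw [S16.mapDomain_prodMap, Finsupp.mapDomain_id]
    rw [h1, ← Finsupp.mapDomain_comp, ← hMxy, ← Finsupp.mapDomain_comp, S16.J]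
    rfl
  -- notation for the five entropies in play
  set A := ent p with hA
  set B := ent q with hB
  set D := ent (subDist p q) with hD
  set S := S16.J w (fun ω : G × G × G => ω.1 - ω.2.1 - ω.2.2) with hS
  set Dl := S16.J w (fun ω : G × G × G => ω.2.1 - ω.2.2) with hDl
  set T := S16.J w (fun ω : G × G × G => ω.1 - (ω.2.1 + ω.2.1)) with hTT
  ---- Step 4 : B ≤ D
  have step4 : A + B ≤ D + A := by
    have h1 : S16.J w (fun ω : G × G × G => (ω.1 - ω.2.1, ω.1)) = A + B := by
      rw [← Jxy]
      refine S16.J_eq_of_comp' w (e := fun v : G × G => (v.1 - v.2, v.1)) ?_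
        (fun ω : G × G × G => (ω.1, ω.2.1)) (fun ω => rfl)
      intro v v' hv
      simp only [Prod.mk.injEq] at hv
      obtain ⟨h1, h2⟩ := hv
      refine Prod.ext h2 ?_
      have : v.1 - (v.1 - v.2) = v'.1 - (v'.1 - v'.2) := by rw [h1, h2]
      simpa using this
    have h2 : S16.J w (fun ω : G × G × G => (ω.1 - ω.2.1, ω.1))
        ≤ S16.J w (fun ω : G × G × G => ω.1 - ω.2.1) + S16.J w (fun ω : G × G × G => ω.1) :=
      S16.J_pair_le w hw1 hw2 _ _
    rw [JD, Ja] at h2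
    linarith
  ---- Step 3 : Dl ≤ 2 D - A
  have step3 : Dl + A ≤ D + D := by
    have c1 : S16.J w (fun ω : G × G × G => (ω.1 - ω.2.1, ω.2))
          + S16.J w (fun ω : G × G × G => ω.2.1 - ω.2.2)
        ≤ S16.J w (fun ω : G × G × G => (ω.1 - ω.2.1, ω.2.1 - ω.2.2))
          + S16.J w (fun ω : G × G × G => ω.2) :=
      S16.condReduce w hw1 hw2 (fun ω : G × G × G => ω.1 - ω.2.1)
        (fun ω : G × G × G => ω.2) (fun v : G × G => v.1 - v.2)
    have c2 : S16.J w (fun ω : G × G × G => (ω.1 - ω.2.1, ω.2)) = A + (B + B) := by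
      rw [← Jid]
      refine S16.J_eq_of_comp' w (e := fun u : G × G × G => (u.1 - u.2.1, u.2)) ?_
        (fun ω : G × G × G => ω) (fun ω => rfl)
      intro u u' hu
      simp only [Prod.mk.injEq] at hu
      obtain ⟨h1, h2⟩ := hu
      refine Prod.ext ?_ h2
      have : u.1 - u.2.1 + u.2.1 = u'.1 - u'.2.1 + u'.2.1 := by rw [h1, h2]
      simpa using this
    have c3 : S16.J w (fun ω : G × G × G => (ω.1 - ω.2.1, ω.1 - ω.2.2))
        = S16.J w (fun ω : G × G × G => (ω.1 - ω.2.1, ω.2.1 - ω.2.2)) := by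
      refine S16.J_eq_of_comp' w (e := fun v : G × G => (v.1, v.1 + v.2)) ?_
        (fun ω : G × G × G => (ω.1 - ω.2.1, ω.2.1 - ω.2.2))
        (fun ω => Prod.ext rfl (by dsimp only; abel))
      intro v v' hv
      simp only [Prod.mk.injEq] at hv
      obtain ⟨h1, h2⟩ := hv
      refine Prod.ext h1 ?_
      have : v.1 + v.2 - v.1 = v'.1 + v'.2 - v'.1 := by rw [h2, h1]
      simpa using this
    have c4 : S16.J w (fun ω : G × G × G => (ω.1 - ω.2.1, ω.1 - ω.2.2))
        ≤ S16.J w (fun ω : G × G × G => ω.1 - ω.2.1)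
          + S16.J w (fun ω : G × G × G => ω.1 - ω.2.2) :=
      S16.J_pair_le w hw1 hw2 _ _
    rw [JD, JDz] at c4
    rw [c2, Jsnd] at c1
    rw [c3] at c4
    have hDlDef : S16.J w (fun ω : G × G × G => ω.2.1 - ω.2.2) = Dl := rfl
    rw [hDlDef] at c1
    linarith
  ---- Step 2 : S ≤ 2 D - A
  have step2 : S + A + (B + B) ≤ (D + B) + (D + B) := by
    have d1 : S16.J w (fun ω : G × G × G => ((ω.1 - ω.2.2, ω.2.1), (ω.1 - ω.2.1, ω.2.2)))
          + S16.J w (fun ω : G × G × G => ω.1 - ω.2.1 - ω.2.2)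
        ≤ S16.J w (fun ω : G × G × G => ((ω.1 - ω.2.2, ω.2.1), ω.1 - ω.2.1 - ω.2.2))
          + S16.J w (fun ω : G × G × G => (ω.1 - ω.2.1, ω.2.2)) :=
      S16.condReduce w hw1 hw2 (fun ω : G × G × G => (ω.1 - ω.2.2, ω.2.1))
        (fun ω : G × G × G => (ω.1 - ω.2.1, ω.2.2)) (fun v : G × G => v.1 - v.2)
    have d2 : S16.J w (fun ω : G × G × G => ((ω.1 - ω.2.2, ω.2.1), (ω.1 - ω.2.1, ω.2.2)))
        = A + (B + B) := by
      rw [← Jid]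
      refine S16.J_eq_of_comp' w
        (e := fun u : G × G × G => ((u.1 - u.2.2, u.2.1), (u.1 - u.2.1, u.2.2))) ?_
        (fun ω : G × G × G => ω) (fun ω => rfl)
      intro u u' hu
      simp only [Prod.mk.injEq] at hu
      obtain ⟨⟨h1, h2⟩, h3, h4⟩ := hu
      have hx : u.1 = u'.1 := by
        have : u.1 - u.2.2 + u.2.2 = u'.1 - u'.2.2 + u'.2.2 := by rw [h1, h4]
        simpa using this
      exact Prod.ext hx (Prod.ext h2 h4)
    have d3 : S16.J w (fun ω : G × G × G => ((ω.1 - ω.2.2, ω.2.1), ω.1 - ω.2.1 - ω.2.2))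
        = S16.J w (fun ω : G × G × G => (ω.1 - ω.2.2, ω.2.1)) := by
      refine S16.J_eq_of_comp' w (e := fun v : G × G => (v, v.1 - v.2)) ?_
        (fun ω : G × G × G => (ω.1 - ω.2.2, ω.2.1))
        (fun ω => Prod.ext rfl (by dsimp only; abel))
      intro v v' hv
      simp only [Prod.mk.injEq] at hv
      exact hv.1
    have d4 : S16.J w (fun ω : G × G × G => (ω.1 - ω.2.2, ω.2.1))
        ≤ S16.J w (fun ω : G × G × G => ω.1 - ω.2.2)
          + S16.J w (fun ω : G × G × G => ω.2.1) :=
      S16.J_pair_le w hw1 hw2 _ _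
    have d5 : S16.J w (fun ω : G × G × G => (ω.1 - ω.2.1, ω.2.2))
        ≤ S16.J w (fun ω : G × G × G => ω.1 - ω.2.1)
          + S16.J w (fun ω : G × G × G => ω.2.2) :=
      S16.J_pair_le w hw1 hw2 _ _
    rw [JDz, Jb] at d4
    rw [JD, Jz] at d5
    rw [d2, d3] at d1
    have hSdef : S16.J w (fun ω : G × G × G => ω.1 - ω.2.1 - ω.2.2) = S := rfl
    rw [hSdef] at d1
    linarith
  ---- Step 1 : T + B ≤ S + Dl
  have step1 : T + B ≤ S + Dl := by
    have e1 : S16.J w (fun ω : G × G × G => (ω.1 - (ω.2.2 + ω.2.2), (ω.1, ω.2.1)))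
          + S16.J w (fun ω : G × G × G => ω.1 - (ω.2.1 + ω.2.1))
        ≤ S16.J w (fun ω : G × G × G => (ω.1 - (ω.2.2 + ω.2.2), ω.1 - (ω.2.1 + ω.2.1)))
          + S16.J w (fun ω : G × G × G => (ω.1, ω.2.1)) :=
      S16.condReduce w hw1 hw2 (fun ω : G × G × G => ω.1 - (ω.2.2 + ω.2.2))
        (fun ω : G × G × G => (ω.1, ω.2.1)) (fun v : G × G => v.1 - (v.2 + v.2))
    have e2 : S16.J w (fun ω : G × G × G => (ω.1 - (ω.2.2 + ω.2.2), (ω.1, ω.2.1)))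
        = A + (B + B) := by
      rw [← Jid]
      refine S16.J_eq_of_comp' w
        (e := fun u : G × G × G => (u.1 - (u.2.2 + u.2.2), (u.1, u.2.1))) ?_
        (fun ω : G × G × G => ω) (fun ω => rfl)
      intro u u' hu
      simp only [Prod.mk.injEq] at hu
      obtain ⟨h1, h2, h3⟩ := hu
      have h4 : u.2.2 + u.2.2 = u'.2.2 + u'.2.2 := by
        have : u.1 - (u.1 - (u.2.2 + u.2.2)) = u'.1 - (u'.1 - (u'.2.2 + u'.2.2)) := by
          rw [h1, h2]
        simpa using this
      exact Prod.ext h2 (Prod.ext h3 (hhalf _ _ h4))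
    have e3 : S16.J w (fun ω : G × G × G => (ω.1 - (ω.2.2 + ω.2.2), ω.1 - (ω.2.1 + ω.2.1)))
        = S16.J w (fun ω : G × G × G => (ω.1 - ω.2.1 - ω.2.2, ω.2.1 - ω.2.2)) := by
      refine S16.J_eq_of_comp' w (e := fun v : G × G => (v.1 + v.2, v.1 - v.2)) ?_
        (fun ω : G × G × G => (ω.1 - ω.2.1 - ω.2.2, ω.2.1 - ω.2.2))
        (fun ω => Prod.ext (by dsimp only; abel) (by dsimp only; abel))
      intro v v' hv
      simp only [Prod.mk.injEq] at hv
      obtain ⟨h1, h2⟩ := hv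
      have h3 : v.1 + v.1 = v'.1 + v'.1 := by
        have : v.1 + v.2 + (v.1 - v.2) = v'.1 + v'.2 + (v'.1 - v'.2) := by rw [h1, h2]
        calc v.1 + v.1 = v.1 + v.2 + (v.1 - v.2) := by abel
          _ = v'.1 + v'.2 + (v'.1 - v'.2) := this
          _ = v'.1 + v'.1 := by abel
      have h4 : v.1 = v'.1 := hhalf _ _ h3
      refine Prod.ext h4 ?_
      have : v.1 + v.2 - v.1 = v'.1 + v'.2 - v'.1 := by rw [h1, h4]
      simpa using this
    have e4 : S16.J w (fun ω : G × G × G => (ω.1 - ω.2.1 - ω.2.2, ω.2.1 - ω.2.2))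
        ≤ S16.J w (fun ω : G × G × G => ω.1 - ω.2.1 - ω.2.2)
          + S16.J w (fun ω : G × G × G => ω.2.1 - ω.2.2) :=
      S16.J_pair_le w hw1 hw2 _ _
    rw [e2, e3, Jxy] at e1
    have hSdef : S16.J w (fun ω : G × G × G => ω.1 - ω.2.1 - ω.2.2) = S := rfl
    have hDlDef : S16.J w (fun ω : G × G × G => ω.2.1 - ω.2.2) = Dl := rfl
    have hTdef : S16.J w (fun ω : G × G × G => ω.1 - (ω.2.1 + ω.2.1)) = T := rfl
    rw [hSdef, hDlDef] at e4
    rw [hTdef] at e1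
    linarith
  ---- conclusion
  rw [dEnt, dEnt, hent2q, hT]
  linarith


end
end

section
/- Let φ : G → H be a homomorphism of abelian groups, and let A, B ⊆ G be finite non-empty subsets. For x, y ∈ H write A_x := A ∩ φ^{-1}(x), B_y := B ∩ φ^{-1}(y), α_x := |A_x|/|A| and β_y := |B_y|/|B|. Write k := d_ent(U_A, U_B), k̄ := d_ent(φ(U_A), φ(U_B)), and M := H(φ(U_A)) + H(φ(U_B)). Then there exist x, y ∈ H such that A_x and B_y are non-empty and k̄ · log(1/(α_x β_y)) ≤ M · (k − d_ent(U_{A_x}, U_{B_y})). -/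
open Finset

noncomputable section

lemma ent_eq_sum {G : Type*} (p : G →₀ ℝ) (S : Finset G) (h : p.support ⊆ S) :
    ent p = ∑ x ∈ S, Real.negMulLog (p x) := by
  refine Finset.sum_subset h (fun x _ hx => ?_)
  rw [Finsupp.notMem_support_iff.mp hx, Real.negMulLog_zero]

lemma mapDomain_apply_sum {G H : Type*} [DecidableEq H] (f : G → H) (p : G →₀ ℝ) (S : Finset G)
    (h : p.support ⊆ S) (y : H) :
    (Finsupp.mapDomain f p) y = ∑ x ∈ S, if f x = y then p x else 0 := by
  rw [Finsupp.mapDomain, Finsupp.sum_apply, Finsupp.sum]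
  rw [Finset.sum_subset h (fun x _ hx => by
    rw [Finsupp.notMem_support_iff.mp hx, Finsupp.single_zero, Finsupp.coe_zero, Pi.zero_apply])]
  exact Finset.sum_congr rfl fun x _ => Finsupp.single_apply

lemma unif_apply {G : Type*} [DecidableEq G] (A : Finset G) (a : G) :
    unif A a = if a ∈ A then ((A.card : ℝ))⁻¹ else 0 := rfl

lemma unif_support {G : Type*} [DecidableEq G] (A : Finset G) : (unif A).support ⊆ A :=
  Finsupp.support_onFinset_subset

lemma prodPMF_apply {G H : Type*} (p : G →₀ ℝ) (q : H →₀ ℝ) (z : G × H) :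
    prodPMF p q z = p z.1 * q z.2 := rfl

lemma prodPMF_support {G H : Type*} (p : G →₀ ℝ) (q : H →₀ ℝ) :
    (prodPMF p q).support ⊆ p.support ×ˢ q.support :=
  Finsupp.support_onFinset_subset

lemma ent_unif {G : Type*} [DecidableEq G] {A : Finset G} (hA : A.Nonempty) :
    ent (unif A) = Real.log A.card := by
  have hc : (0:ℝ) < A.card := by exact_mod_cast Finset.card_pos.mpr hA
  rw [ent_eq_sum _ A (unif_support A),
    Finset.sum_congr rfl (fun a ha => by rw [unif_apply, if_pos ha]),
    Finset.sum_const, nsmul_eq_mul]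
  rw [Real.negMulLog, Real.log_inv]
  field_simp

lemma subDist_unif_apply {G : Type*} [AddCommGroup G] [DecidableEq G] (A B : Finset G) (s : G) :
    subDist (unif A) (unif B) s
      = (((A ×ˢ B).filter fun z : G × G => z.1 - z.2 = s).card : ℝ)
          * ((A.card : ℝ)⁻¹ * (B.card : ℝ)⁻¹) := by
  rw [subDist, mapDomain_apply_sum _ _ (A ×ˢ B)
    ((prodPMF_support _ _).trans (Finset.product_subset_product (unif_support A) (unif_support B)))]
  rw [← Finset.sum_filter]
  have h : ∀ z ∈ (A ×ˢ B).filter (fun z : G × G => z.1 - z.2 = s),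
      prodPMF (unif A) (unif B) z = (A.card : ℝ)⁻¹ * (B.card : ℝ)⁻¹ := by
    intro z hz
    obtain ⟨hz1, -⟩ := Finset.mem_filter.mp hz
    obtain ⟨h1, h2⟩ := Finset.mem_product.mp hz1
    rw [prodPMF_apply, unif_apply, unif_apply, if_pos h1, if_pos h2]
  rw [Finset.sum_congr rfl h, Finset.sum_const, nsmul_eq_mul]

lemma subDist_support {G : Type*} [AddCommGroup G] [DecidableEq G] (p q : G →₀ ℝ) :
    (subDist p q).support ⊆ (p.support ×ˢ q.support).image fun z : G × G => z.1 - z.2 :=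
  Finsupp.mapDomain_support.trans (Finset.image_subset_image (prodPMF_support p q))

lemma sum_subDist_unif {G : Type*} [AddCommGroup G] [DecidableEq G] {A B : Finset G}
    (hA : A.Nonempty) (hB : B.Nonempty) {D : Finset G}
    (hD : ∀ z ∈ A ×ˢ B, z.1 - z.2 ∈ D) :
    ∑ s ∈ D, subDist (unif A) (unif B) s = 1 := by
  have ha : (0:ℝ) < A.card := by exact_mod_cast Finset.card_pos.mpr hA
  have hb : (0:ℝ) < B.card := by exact_mod_cast Finset.card_pos.mpr hB
  rw [Finset.sum_congr rfl (fun s _ => subDist_unif_apply A B s), ← Finset.sum_mul,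
    ← Nat.cast_sum, ← Finset.card_eq_sum_card_fiberwise hD, Finset.card_product]
  push_cast
  field_simp

lemma mapDomain_unif_apply {G H : Type*} [DecidableEq G] [DecidableEq H] (φ : G → H)
    (A : Finset G) (x : H) :
    Finsupp.mapDomain φ (unif A) x
      = ((A.filter fun a => φ a = x).card : ℝ) * (A.card : ℝ)⁻¹ := by
  rw [mapDomain_apply_sum φ _ A (unif_support A) x, ← Finset.sum_filter]
  rw [Finset.sum_congr rfl (fun a ha => by
    rw [unif_apply, if_pos (Finset.mem_of_mem_filter a ha)]),
    Finset.sum_const, nsmul_eq_mul]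

lemma decomp_card {G H : Type*} [AddCommGroup G] [AddCommGroup H] [DecidableEq G] [DecidableEq H]
    (φ : G →+ H) (A B : Finset G) (s : G) :
    (((A ×ˢ B).filter fun z : G × G => z.1 - z.2 = s).card : ℝ)
      = ∑ xy ∈ (A.image φ) ×ˢ (B.image φ),
          ((((A.filter fun a => φ a = xy.1) ×ˢ (B.filter fun b => φ b = xy.2)).filter
            fun z : G × G => z.1 - z.2 = s).card : ℝ) := by
  rw [← Nat.cast_sum]
  congr 1
  rw [Finset.card_eq_sum_card_fiberwise (f := fun z : G × G => (φ z.1, φ z.2))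
    (t := (A.image φ) ×ˢ (B.image φ)) ?_]
  · refine Finset.sum_congr rfl fun xy _ => ?_
    congr 1
    ext z
    simp only [Finset.mem_filter, Finset.mem_product, Prod.ext_iff]
    tauto
  · intro z hz
    obtain ⟨hz1, -⟩ := Finset.mem_filter.mp hz
    obtain ⟨h1, h2⟩ := Finset.mem_product.mp hz1
    exact Finset.mem_product.mpr ⟨Finset.mem_image_of_mem φ h1, Finset.mem_image_of_mem φ h2⟩

lemma fiber_zero {G H : Type*} [AddCommGroup G] [AddCommGroup H] [DecidableEq G] [DecidableEq H]
    (φ : G →+ H) (A B : Finset G) {x y : H} {s : G} (h : φ s ≠ x - y) :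
    subDist (unif (A.filter fun a => φ a = x)) (unif (B.filter fun b => φ b = y)) s = 0 := by
  rw [subDist_unif_apply]
  have he : (((A.filter fun a => φ a = x) ×ˢ (B.filter fun b => φ b = y)).filter
      fun z : G × G => z.1 - z.2 = s) = ∅ := by
    rw [Finset.filter_eq_empty_iff]
    rintro z hz rfl
    obtain ⟨h1, h2⟩ := Finset.mem_product.mp hz
    obtain ⟨-, hx⟩ := Finset.mem_filter.mp h1
    obtain ⟨-, hy⟩ := Finset.mem_filter.mp h2
    exact h (by rw [map_sub, hx, hy])
  rw [he]
  simp


lemma kl_aux {ι : Type*} (I : Finset ι) (u v : ι → ℝ) (hu : ∀ i ∈ I, 0 ≤ u i)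
    (hv : ∀ i ∈ I, 0 ≤ v i) (huv : ∀ i ∈ I, u i ≠ 0 → v i ≠ 0)
    (hu1 : ∑ i ∈ I, u i = 1) (hv1 : ∑ i ∈ I, v i ≤ 1) :
    ∑ i ∈ I, u i * Real.log (v i) ≤ ∑ i ∈ I, u i * Real.log (u i) := by
  have key : ∀ i ∈ I, u i * Real.log (v i) - u i * Real.log (u i) ≤ v i - u i := by
    intro i hi
    rcases eq_or_lt_of_le (hu i hi) with h0 | h0
    · simp only [← h0, zero_mul, sub_zero, sub_self]
      exact hv i hi
    · have hv0 : 0 < v i := (hv i hi).lt_of_ne' (huv i hi (ne_of_gt h0))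
      have hlog := Real.log_le_sub_one_of_pos (div_pos hv0 h0)
      rw [Real.log_div (ne_of_gt hv0) (ne_of_gt h0)] at hlog
      have h2 : u i * (Real.log (v i) - Real.log (u i)) ≤ u i * (v i / u i - 1) :=
        mul_le_mul_of_nonneg_left hlog (le_of_lt h0)
      have h3 : u i * (v i / u i - 1) = v i - u i := by field_simp
      nlinarith
  have hsum := Finset.sum_le_sum key
  rw [Finset.sum_sub_distrib, Finset.sum_sub_distrib] at hsum
  linarith

lemma core {ι κ σ : Type*} [DecidableEq κ] (T : Finset ι) (D : Finset σ) (Z : Finset κ)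
    (g : ι → κ) (π : σ → κ) (c : ι → ℝ) (ω : ι → σ → ℝ) (w : σ → ℝ) (m : κ → ℝ)
    (hgT : ∀ i ∈ T, g i ∈ Z)
    (hc : ∀ i ∈ T, 0 ≤ c i) (hc1 : ∑ i ∈ T, c i = 1)
    (hω : ∀ i ∈ T, ∀ s, 0 ≤ ω i s)
    (hω1 : ∀ i ∈ T, ∑ s ∈ D, ω i s = 1)
    (hfib : ∀ i ∈ T, ∀ s, π s ≠ g i → ω i s = 0)
    (hw : ∀ s, w s = ∑ i ∈ T, c i * ω i s)
    (hm : ∀ z, m z = ∑ i ∈ T, if g i = z then c i else 0) :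
    ∑ z ∈ Z, Real.negMulLog (m z) + ∑ i ∈ T, c i * (∑ s ∈ D, Real.negMulLog (ω i s))
      ≤ ∑ s ∈ D, Real.negMulLog (w s) := by
  have hw0 : ∀ s, 0 ≤ w s := fun s => by
    rw [hw]
    exact Finset.sum_nonneg fun i hi => mul_nonneg (hc i hi) (hω i hi s)
  have hm0 : ∀ z, 0 ≤ m z := fun z => by
    rw [hm]
    exact Finset.sum_nonneg fun i hi => by
      split_ifs with h
      · exact hc i hi
      · exact le_refl 0
  have hmge : ∀ i ∈ T, c i ≤ m (g i) := by
    intro i hi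
    rw [hm]
    have := Finset.single_le_sum (f := fun j => if g j = g i then c j else 0)
      (fun j hj => by split_ifs with h; exacts [hc j hj, le_refl 0]) hi
    simpa using this
  have hwge : ∀ i ∈ T, ∀ s, c i * ω i s ≤ w s := by
    intro i hi s
    rw [hw s]
    exact Finset.single_le_sum (f := fun j => c j * ω j s)
      (fun j hj => mul_nonneg (hc j hj) (hω j hj s)) hi
  have hmfib : ∀ z, ∑ s ∈ D, (if π s = z then w s else 0) = m z := by
    intro z
    have step1 : ∀ s ∈ D, (if π s = z then w s else 0)
        = ∑ i ∈ T, (if π s = z then c i * ω i s else 0) := by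
      intro s _
      by_cases h : π s = z
      · simp only [if_pos h, hw s]
      · simp only [if_neg h, Finset.sum_const_zero]
    rw [Finset.sum_congr rfl step1, Finset.sum_comm, hm]
    refine Finset.sum_congr rfl fun i hi => ?_
    by_cases hgi : g i = z
    · rw [if_pos hgi]
      have : ∀ s ∈ D, (if π s = z then c i * ω i s else 0) = c i * ω i s := by
        intro s _
        by_cases h : π s = z
        · rw [if_pos h]
        · rw [if_neg h, hfib i hi s (by rw [hgi]; exact h), mul_zero]
      rw [Finset.sum_congr rfl this, ← Finset.mul_sum, hω1 i hi, mul_one]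
    · rw [if_neg hgi]
      refine Finset.sum_eq_zero fun s _ => ?_
      by_cases h : π s = z
      · rw [if_pos h, hfib i hi s (by rw [h]; exact fun e => hgi e.symm), mul_zero]
      · rw [if_neg h]
  -- the KL step
  set u : ι × σ → ℝ := fun p => c p.1 * ω p.1 p.2 with hu_def
  set v : ι × σ → ℝ := fun p => c p.1 * (if π p.2 = g p.1 then w p.2 / m (g p.1) else 0)
    with hv_def
  have hTmem : ∀ p : ι × σ, p ∈ T ×ˢ D → p.1 ∈ T ∧ p.2 ∈ D := fun p hp =>
    Finset.mem_product.mp hp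
  have hU : ∀ p ∈ T ×ˢ D, 0 ≤ u p := fun p hp =>
    mul_nonneg (hc p.1 (hTmem p hp).1) (hω p.1 (hTmem p hp).1 p.2)
  have hV : ∀ p ∈ T ×ˢ D, 0 ≤ v p := fun p hp => by
    refine mul_nonneg (hc p.1 (hTmem p hp).1) ?_
    split_ifs
    · exact div_nonneg (hw0 p.2) (hm0 (g p.1))
    · exact le_refl 0
  have hUV : ∀ p ∈ T ×ˢ D, u p ≠ 0 → v p ≠ 0 := by
    intro p hp hne
    obtain ⟨h1, h2⟩ := hTmem p hp
    have hcp : 0 < c p.1 := (hc p.1 h1).lt_of_ne' fun h => hne (by simp [hu_def, h])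
    have hωp : 0 < ω p.1 p.2 := (hω p.1 h1 p.2).lt_of_ne' fun h => hne (by simp [hu_def, h])
    have hπ : π p.2 = g p.1 := by
      by_contra h
      exact absurd (hfib p.1 h1 p.2 h) (ne_of_gt hωp)
    have hwp : 0 < w p.2 := lt_of_lt_of_le (mul_pos hcp hωp) (hwge p.1 h1 p.2)
    have hmp : 0 < m (g p.1) := lt_of_lt_of_le hcp (hmge p.1 h1)
    have : v p = c p.1 * (w p.2 / m (g p.1)) := by rw [hv_def]; simp only [if_pos hπ]
    rw [this]
    exact ne_of_gt (mul_pos hcp (div_pos hwp hmp))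
  have hU1 : ∑ p ∈ T ×ˢ D, u p = 1 := by
    rw [Finset.sum_product]
    simp only [hu_def]
    rw [Finset.sum_congr rfl (fun i hi => by rw [← Finset.mul_sum, hω1 i hi, mul_one])]
    exact hc1
  have hV1 : ∑ p ∈ T ×ˢ D, v p ≤ 1 := by
    rw [Finset.sum_product]
    have step : ∀ i ∈ T, ∑ s ∈ D, v (i, s) ≤ c i := by
      intro i hi
      have e : ∀ s ∈ D, v (i, s) = c i * ((if π s = g i then w s else 0) * (m (g i))⁻¹) := by
        intro s _
        rw [hv_def]
        simp only []
        by_cases h : π s = g i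
        · rw [if_pos h, if_pos h, div_eq_mul_inv]
        · rw [if_neg h, if_neg h, zero_mul, mul_zero]
      rw [Finset.sum_congr rfl e, ← Finset.mul_sum, ← Finset.sum_mul, hmfib (g i)]
      rcases eq_or_lt_of_le (hm0 (g i)) with h | h
      · rw [← h, zero_mul, mul_zero]
        exact hc i hi
      · rw [mul_inv_cancel₀ (ne_of_gt h), mul_one]
    calc ∑ i ∈ T, ∑ s ∈ D, v (i, s) ≤ ∑ i ∈ T, c i := Finset.sum_le_sum step
      _ = 1 := hc1
  have hKL := kl_aux (T ×ˢ D) u v hU hV hUV hU1 hV1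
  -- compute ∑ u log u
  have Hu : ∑ p ∈ T ×ˢ D, u p * Real.log (u p)
      = ∑ i ∈ T, c i * Real.log (c i)
        + ∑ i ∈ T, c i * (∑ s ∈ D, ω i s * Real.log (ω i s)) := by
    rw [Finset.sum_product]
    have step : ∀ i ∈ T, ∑ s ∈ D, u (i, s) * Real.log (u (i, s))
        = c i * Real.log (c i) + c i * (∑ s ∈ D, ω i s * Real.log (ω i s)) := by
      intro i hi
      have pt : ∀ s ∈ D, u (i, s) * Real.log (u (i, s))
          = ω i s * (c i * Real.log (c i)) + c i * (ω i s * Real.log (ω i s)) := by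
        intro s _
        simp only [hu_def]
        by_cases h1 : c i = 0
        · rw [h1]; ring_nf
        · by_cases h2 : ω i s = 0
          · rw [h2]; ring_nf
          · rw [Real.log_mul h1 h2]; ring
      rw [Finset.sum_congr rfl pt, Finset.sum_add_distrib, ← Finset.sum_mul, hω1 i hi,
        one_mul, ← Finset.mul_sum]
    rw [Finset.sum_congr rfl step, Finset.sum_add_distrib]
  -- compute ∑ u log v
  have Hv : ∑ p ∈ T ×ˢ D, u p * Real.log (v p)
      = ∑ i ∈ T, c i * Real.log (c i)
        + ∑ s ∈ D, w s * Real.log (w s)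
        - ∑ i ∈ T, c i * Real.log (m (g i)) := by
    have pt : ∀ p ∈ T ×ˢ D, u p * Real.log (v p)
        = ω p.1 p.2 * (c p.1 * Real.log (c p.1))
          + c p.1 * (ω p.1 p.2 * Real.log (w p.2))
          - ω p.1 p.2 * (c p.1 * Real.log (m (g p.1))) := by
      intro p hp
      obtain ⟨h1, h2⟩ := hTmem p hp
      by_cases hc0 : c p.1 = 0
      · simp [hu_def, hc0]
      · by_cases hω0 : ω p.1 p.2 = 0
        · simp [hu_def, hω0]
        · have hπ : π p.2 = g p.1 := by
            by_contra h
            exact absurd (hfib p.1 h1 p.2 h) hω0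
          have hcp : 0 < c p.1 := (hc p.1 h1).lt_of_ne' hc0
          have hωp : 0 < ω p.1 p.2 := (hω p.1 h1 p.2).lt_of_ne' hω0
          have hwp : 0 < w p.2 := lt_of_lt_of_le (mul_pos hcp hωp) (hwge p.1 h1 p.2)
          have hmp : 0 < m (g p.1) := lt_of_lt_of_le hcp (hmge p.1 h1)
          have hv' : v p = c p.1 * (w p.2 / m (g p.1)) := by
            rw [hv_def]; simp only [if_pos hπ]
          rw [hu_def, hv', Real.log_mul hc0 (ne_of_gt (div_pos hwp hmp)),
            Real.log_div (ne_of_gt hwp) (ne_of_gt hmp)]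
          ring
    rw [Finset.sum_congr rfl pt]
    rw [Finset.sum_sub_distrib, Finset.sum_add_distrib]
    congr 1
    · congr 1
      · rw [Finset.sum_product]
        dsimp only
        refine Finset.sum_congr rfl fun i hi => ?_
        rw [← Finset.sum_mul, hω1 i hi, one_mul]
      · rw [Finset.sum_product, Finset.sum_comm]
        dsimp only
        refine Finset.sum_congr rfl fun s _ => ?_
        rw [Finset.sum_congr rfl (fun i _ => by rw [show c i * (ω i s * Real.log (w s))
          = c i * ω i s * Real.log (w s) by ring]), ← Finset.sum_mul, ← hw s]
    · rw [Finset.sum_product]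
      dsimp only
      refine Finset.sum_congr rfl fun i hi => ?_
      rw [← Finset.sum_mul, hω1 i hi, one_mul]
  -- regroup the m-term fiberwise
  have Hm2 : ∑ i ∈ T, c i * Real.log (m (g i)) = ∑ z ∈ Z, m z * Real.log (m z) := by
    rw [← Finset.sum_fiberwise_of_maps_to hgT (fun i => c i * Real.log (m (g i)))]
    refine Finset.sum_congr rfl fun z _ => ?_
    have e : ∀ i ∈ T.filter (fun i => g i = z), c i * Real.log (m (g i))
        = c i * Real.log (m z) := by
      intro i hi
      rw [(Finset.mem_filter.mp hi).2]
    rw [Finset.sum_congr rfl e, ← Finset.sum_mul]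
    congr 1
    rw [hm, Finset.sum_filter]
  have e1 : ∑ z ∈ Z, Real.negMulLog (m z) = -∑ z ∈ Z, m z * Real.log (m z) := by
    simp [Real.negMulLog, Finset.sum_neg_distrib, neg_mul]
  have e2 : ∑ s ∈ D, Real.negMulLog (w s) = -∑ s ∈ D, w s * Real.log (w s) := by
    simp [Real.negMulLog, Finset.sum_neg_distrib, neg_mul]
  have e3 : ∑ i ∈ T, c i * (∑ s ∈ D, Real.negMulLog (ω i s))
      = -∑ i ∈ T, c i * (∑ s ∈ D, ω i s * Real.log (ω i s)) := by
    simp [Real.negMulLog, Finset.sum_neg_distrib, neg_mul, mul_neg]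
  rw [e1, e2, e3]
  rw [Hu, Hv, Hm2] at hKL
  linarith


set_option maxHeartbeats 2000000 in
/-- Let `φ : G → H` be a homomorphism of abelian groups and `A, B ⊆ G`
finite non-empty subsets, with fibers `A_x = A ∩ φ⁻¹(x)`, `B_y = B ∩ φ⁻¹(y)` and fiber
densities `α_x = |A_x|/|A|`, `β_y = |B_y|/|B|`. With `k = d_ent(U_A, U_B)`,
`k̄ = d_ent(φ(U_A), φ(U_B))` and `M = H(φ(U_A)) + H(φ(U_B))`, there exist `x, y ∈ H` with
`A_x, B_y` non-empty and `k̄ log(1/(α_x β_y)) ≤ M (k - d_ent(U_{A_x}, U_{B_y}))`. -/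
theorem statement19 {G H : Type*} [AddCommGroup G] [AddCommGroup H]
    [DecidableEq G] [DecidableEq H]
    (φ : G →+ H) (A B : Finset G) (hA : A.Nonempty) (hB : B.Nonempty) :
    ∃ x y : H, (A.filter fun a => φ a = x).Nonempty ∧ (B.filter fun b => φ b = y).Nonempty ∧
      dEnt (Finsupp.mapDomain φ (unif A)) (Finsupp.mapDomain φ (unif B)) *
          Real.log (((A.card : ℝ) / ((A.filter fun a => φ a = x).card : ℝ)) *
            ((B.card : ℝ) / ((B.filter fun b => φ b = y).card : ℝ)))
        ≤ (ent (Finsupp.mapDomain φ (unif A)) + ent (Finsupp.mapDomain φ (unif B))) *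
            (dEnt (unif A) (unif B) -
              dEnt (unif (A.filter fun a => φ a = x)) (unif (B.filter fun b => φ b = y))) := by
  by_contra hcon
  push_neg at hcon
  have ha : (0:ℝ) < A.card := by exact_mod_cast Finset.card_pos.mpr hA
  have hb : (0:ℝ) < B.card := by exact_mod_cast Finset.card_pos.mpr hB
  set X := A.image φ with hX
  set Y := B.image φ with hY
  have hXY : (X ×ˢ Y).Nonempty := (hA.image φ).product (hB.image φ)
  have hfibA : ∀ x ∈ X, (A.filter fun a => φ a = x).Nonempty := by
    intro x hx
    obtain ⟨a, haA, rfl⟩ := Finset.mem_image.mp hx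
    exact ⟨a, Finset.mem_filter.mpr ⟨haA, rfl⟩⟩
  have hfibB : ∀ y ∈ Y, (B.filter fun b => φ b = y).Nonempty := by
    intro y hy
    obtain ⟨b, hbB, rfl⟩ := Finset.mem_image.mp hy
    exact ⟨b, Finset.mem_filter.mpr ⟨hbB, rfl⟩⟩
  have hcardA : ∀ x ∈ X, (0:ℝ) < ((A.filter fun a => φ a = x).card : ℝ) := by
    intro x hx
    exact_mod_cast Finset.card_pos.mpr (hfibA x hx)
  have hcardB : ∀ y ∈ Y, (0:ℝ) < ((B.filter fun b => φ b = y).card : ℝ) := by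
    intro y hy
    exact_mod_cast Finset.card_pos.mpr (hfibB y hy)
  set pφ := Finsupp.mapDomain φ (unif A) with hpφdef
  set qφ := Finsupp.mapDomain φ (unif B) with hqφdef
  have hpφ : ∀ x, pφ x = ((A.filter fun a => φ a = x).card : ℝ) * (A.card : ℝ)⁻¹ :=
    mapDomain_unif_apply φ A
  have hqφ : ∀ y, qφ y = ((B.filter fun b => φ b = y).card : ℝ) * (B.card : ℝ)⁻¹ :=
    mapDomain_unif_apply φ B
  have hpφ0 : ∀ x, 0 ≤ pφ x := fun x => by rw [hpφ x]; positivity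
  have hqφ0 : ∀ y, 0 ≤ qφ y := fun y => by rw [hqφ y]; positivity
  have hpφpos : ∀ x ∈ X, 0 < pφ x := fun x hx => by
    rw [hpφ x]; exact mul_pos (hcardA x hx) (inv_pos.mpr ha)
  have hqφpos : ∀ y ∈ Y, 0 < qφ y := fun y hy => by
    rw [hqφ y]; exact mul_pos (hcardB y hy) (inv_pos.mpr hb)
  have hsumcardA : ∑ x ∈ X, ((A.filter fun a => φ a = x).card : ℝ) = A.card := by
    rw [← Nat.cast_sum]
    exact_mod_cast congrArg Nat.cast
      (Finset.card_eq_sum_card_fiberwise (fun a ha => Finset.mem_image_of_mem φ ha)).symm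
  have hsumcardB : ∑ y ∈ Y, ((B.filter fun b => φ b = y).card : ℝ) = B.card := by
    rw [← Nat.cast_sum]
    exact_mod_cast congrArg Nat.cast
      (Finset.card_eq_sum_card_fiberwise (fun b hb => Finset.mem_image_of_mem φ hb)).symm
  have hmassA : ∑ x ∈ X, pφ x = 1 := by
    rw [Finset.sum_congr rfl (fun x _ => hpφ x), ← Finset.sum_mul, hsumcardA,
      mul_inv_cancel₀ (ne_of_gt ha)]
  have hmassB : ∑ y ∈ Y, qφ y = 1 := by
    rw [Finset.sum_congr rfl (fun y _ => hqφ y), ← Finset.sum_mul, hsumcardB,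
      mul_inv_cancel₀ (ne_of_gt hb)]
  have hsuppp : pφ.support ⊆ X :=
    Finsupp.mapDomain_support.trans (Finset.image_subset_image (unif_support A))
  have hsuppq : qφ.support ⊆ Y :=
    Finsupp.mapDomain_support.trans (Finset.image_subset_image (unif_support B))
  have hlogp : ∀ x ∈ X, Real.log (pφ x)
      = -Real.log ((A.card : ℝ) / ((A.filter fun a => φ a = x).card : ℝ)) := by
    intro x hx
    rw [hpφ x, Real.log_mul (ne_of_gt (hcardA x hx)) (ne_of_gt (inv_pos.mpr ha)),
      Real.log_inv, Real.log_div (ne_of_gt ha) (ne_of_gt (hcardA x hx))]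
    ring
  have hlogq : ∀ y ∈ Y, Real.log (qφ y)
      = -Real.log ((B.card : ℝ) / ((B.filter fun b => φ b = y).card : ℝ)) := by
    intro y hy
    rw [hqφ y, Real.log_mul (ne_of_gt (hcardB y hy)) (ne_of_gt (inv_pos.mpr hb)),
      Real.log_inv, Real.log_div (ne_of_gt hb) (ne_of_gt (hcardB y hy))]
    ring
  have hentpA : ent pφ
      = ∑ x ∈ X, pφ x * Real.log ((A.card : ℝ) / ((A.filter fun a => φ a = x).card : ℝ)) := by
    rw [ent_eq_sum _ X hsuppp]
    refine Finset.sum_congr rfl fun x hx => ?_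
    rw [Real.negMulLog, hlogp x hx]
    ring
  have hentqA : ent qφ
      = ∑ y ∈ Y, qφ y * Real.log ((B.card : ℝ) / ((B.filter fun b => φ b = y).card : ℝ)) := by
    rw [ent_eq_sum _ Y hsuppq]
    refine Finset.sum_congr rfl fun y hy => ?_
    rw [Real.negMulLog, hlogq y hy]
    ring
  have hMp : 0 ≤ ent pφ := by
    rw [hentpA]
    refine Finset.sum_nonneg fun x hx => mul_nonneg (hpφ0 x) (Real.log_nonneg ?_)
    rw [le_div_iff₀ (hcardA x hx), one_mul]
    exact_mod_cast Finset.card_le_card (Finset.filter_subset _ _)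
  have hMq : 0 ≤ ent qφ := by
    rw [hentqA]
    refine Finset.sum_nonneg fun y hy => mul_nonneg (hqφ0 y) (Real.log_nonneg ?_)
    rw [le_div_iff₀ (hcardB y hy), one_mul]
    exact_mod_cast Finset.card_le_card (Finset.filter_subset _ _)
  -- instantiate the core fibring inequality
  set D : Finset G := (A ×ˢ B).image (fun z : G × G => z.1 - z.2) with hD
  set Z : Finset H := (X ×ˢ Y).image (fun z : H × H => z.1 - z.2) with hZ
  set c : H × H → ℝ := fun xy => pφ xy.1 * qφ xy.2 with hc_def
  set ω : H × H → G → ℝ := fun xy s =>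
    subDist (unif (A.filter fun a => φ a = xy.1)) (unif (B.filter fun b => φ b = xy.2)) s
    with hω_def
  have hcsum : ∑ xy ∈ X ×ˢ Y, c xy = 1 := by
    rw [Finset.sum_product]
    rw [Finset.sum_congr rfl (fun x _ => by
      rw [show ∀ x : H, ∑ y ∈ Y, c (x, y) = pφ x * ∑ y ∈ Y, qφ y from fun x => by
        rw [Finset.mul_sum], hmassB, mul_one])]
    exact hmassA
  have HCORE := core (X ×ˢ Y) D Z (fun xy : H × H => xy.1 - xy.2) (fun s => φ s) c ω
    (fun s => subDist (unif A) (unif B) s) (fun z => subDist pφ qφ z)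
    (fun i hi => Finset.mem_image_of_mem _ hi)
    (fun i _ => mul_nonneg (hpφ0 i.1) (hqφ0 i.2))
    hcsum
    (fun i _ s => by rw [hω_def]; dsimp only; rw [subDist_unif_apply]; positivity)
    (by
      intro i hi
      obtain ⟨hx, hy⟩ := Finset.mem_product.mp hi
      rw [hω_def]
      exact sum_subDist_unif (hfibA i.1 hx) (hfibB i.2 hy) (fun z hz => by
        refine Finset.mem_image_of_mem _ ?_
        exact Finset.product_subset_product (Finset.filter_subset _ _)
          (Finset.filter_subset _ _) hz))
    (fun i _ s h => by rw [hω_def]; exact fiber_zero φ A B h)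
    (by
      intro s
      rw [subDist_unif_apply A B s, decomp_card φ A B s, Finset.sum_mul]
      refine Finset.sum_congr rfl fun xy hxy => ?_
      obtain ⟨hx, hy⟩ := Finset.mem_product.mp hxy
      rw [hc_def, hω_def]
      dsimp only
      rw [hpφ xy.1, hqφ xy.2, subDist_unif_apply]
      have h1 := ne_of_gt (hcardA xy.1 hx)
      have h2 := ne_of_gt (hcardB xy.2 hy)
      field_simp)
    (by
      intro z
      rw [subDist, mapDomain_apply_sum _ _ (X ×ˢ Y)
        ((prodPMF_support _ _).trans (Finset.product_subset_product hsuppp hsuppq)) z]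
      exact Finset.sum_congr rfl fun xy _ => by rw [prodPMF_apply, hc_def])
  -- convert sums to entropies
  have hentw : ent (subDist (unif A) (unif B))
      = ∑ s ∈ D, Real.negMulLog (subDist (unif A) (unif B) s) :=
    ent_eq_sum _ D ((subDist_support _ _).trans (Finset.image_subset_image
      (Finset.product_subset_product (unif_support A) (unif_support B))))
  have hentm : ent (subDist pφ qφ) = ∑ z ∈ Z, Real.negMulLog (subDist pφ qφ z) :=
    ent_eq_sum _ Z ((subDist_support _ _).trans (Finset.image_subset_image
      (Finset.product_subset_product hsuppp hsuppq)))
  have hentω : ∀ xy ∈ X ×ˢ Y,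
      ent (subDist (unif (A.filter fun a => φ a = xy.1)) (unif (B.filter fun b => φ b = xy.2)))
      = ∑ s ∈ D, Real.negMulLog (ω xy s) := by
    intro xy _
    rw [hω_def]
    exact ent_eq_sum _ D ((subDist_support _ _).trans (Finset.image_subset_image
      (Finset.product_subset_product ((unif_support _).trans (Finset.filter_subset _ _))
        ((unif_support _).trans (Finset.filter_subset _ _)))))
  have HSTAR : ent (subDist pφ qφ)
      + ∑ xy ∈ X ×ˢ Y, c xy * ent (subDist (unif (A.filter fun a => φ a = xy.1))
          (unif (B.filter fun b => φ b = xy.2)))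
      ≤ ent (subDist (unif A) (unif B)) := by
    have e : ∑ xy ∈ X ×ˢ Y, c xy * ent (subDist (unif (A.filter fun a => φ a = xy.1))
        (unif (B.filter fun b => φ b = xy.2)))
        = ∑ xy ∈ X ×ˢ Y, c xy * ∑ s ∈ D, Real.negMulLog (ω xy s) :=
      Finset.sum_congr rfl fun xy hxy => by rw [hentω xy hxy]
    rw [hentw, hentm, e]
    exact HCORE
  -- separable sums over the product set
  have hsep1 : ∀ f : H → ℝ, ∑ xy ∈ X ×ˢ Y, c xy * f xy.1 = ∑ x ∈ X, pφ x * f x := by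
    intro f
    rw [Finset.sum_product]
    refine Finset.sum_congr rfl fun x _ => ?_
    have e : ∀ y ∈ Y, c (x, y) * f (x, y).1 = (pφ x * f x) * qφ y := by
      intro y _
      rw [hc_def]
      dsimp only
      ring
    rw [Finset.sum_congr rfl e, ← Finset.mul_sum, hmassB, mul_one]
  have hsep2 : ∀ f : H → ℝ, ∑ xy ∈ X ×ˢ Y, c xy * f xy.2 = ∑ y ∈ Y, qφ y * f y := by
    intro f
    rw [Finset.sum_product]
    have e : ∀ x ∈ X, ∑ y ∈ Y, c (x, y) * f (x, y).2 = pφ x * ∑ y ∈ Y, qφ y * f y := by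
      intro x _
      rw [Finset.mul_sum]
      refine Finset.sum_congr rfl fun y _ => ?_
      rw [hc_def]
      dsimp only
      ring
    rw [Finset.sum_congr rfl e, ← Finset.sum_mul, hmassA, one_mul]
  have entp2 : ∑ x ∈ X, pφ x * Real.log ((A.filter fun a => φ a = x).card : ℝ)
      = Real.log A.card - ent pφ := by
    have e : ∀ x ∈ X, pφ x * Real.log ((A.filter fun a => φ a = x).card : ℝ)
        + pφ x * Real.log ((A.card : ℝ) / ((A.filter fun a => φ a = x).card : ℝ))
        = pφ x * Real.log A.card := by
      intro x hx
      rw [Real.log_div (ne_of_gt ha) (ne_of_gt (hcardA x hx))]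
      ring
    have hs := Finset.sum_congr rfl e
    rw [Finset.sum_add_distrib, ← Finset.sum_mul, hmassA, one_mul] at hs
    rw [hentpA]
    linarith
  have entq2 : ∑ y ∈ Y, qφ y * Real.log ((B.filter fun b => φ b = y).card : ℝ)
      = Real.log B.card - ent qφ := by
    have e : ∀ y ∈ Y, qφ y * Real.log ((B.filter fun b => φ b = y).card : ℝ)
        + qφ y * Real.log ((B.card : ℝ) / ((B.filter fun b => φ b = y).card : ℝ))
        = qφ y * Real.log B.card := by
      intro y hy
      rw [Real.log_div (ne_of_gt hb) (ne_of_gt (hcardB y hy))]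
      ring
    have hs := Finset.sum_congr rfl e
    rw [Finset.sum_add_distrib, ← Finset.sum_mul, hmassB, one_mul] at hs
    rw [hentqA]
    linarith
  -- expansions of the Ruzsa distances
  have hkval : dEnt (unif A) (unif B)
      = ent (subDist (unif A) (unif B)) - Real.log A.card / 2 - Real.log B.card / 2 := by
    rw [dEnt, ent_unif hA, ent_unif hB]
  have hkbval : dEnt pφ qφ = ent (subDist pφ qφ) - ent pφ / 2 - ent qφ / 2 := by rw [dEnt]
  have hdval : ∀ xy ∈ X ×ˢ Y,
      dEnt (unif (A.filter fun a => φ a = xy.1)) (unif (B.filter fun b => φ b = xy.2))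
      = ent (subDist (unif (A.filter fun a => φ a = xy.1))
            (unif (B.filter fun b => φ b = xy.2)))
        - Real.log ((A.filter fun a => φ a = xy.1).card : ℝ) / 2
        - Real.log ((B.filter fun b => φ b = xy.2).card : ℝ) / 2 := by
    intro xy hxy
    obtain ⟨hx, hy⟩ := Finset.mem_product.mp hxy
    rw [dEnt, ent_unif (hfibA xy.1 hx), ent_unif (hfibB xy.2 hy)]
  -- the weighted sum of fiber distances
  have hS1 : ∑ xy ∈ X ×ˢ Y, c xy * dEnt (unif (A.filter fun a => φ a = xy.1))
        (unif (B.filter fun b => φ b = xy.2))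
      = (∑ xy ∈ X ×ˢ Y, c xy * ent (subDist (unif (A.filter fun a => φ a = xy.1))
            (unif (B.filter fun b => φ b = xy.2))))
        - (∑ x ∈ X, pφ x * Real.log ((A.filter fun a => φ a = x).card : ℝ)) / 2
        - (∑ y ∈ Y, qφ y * Real.log ((B.filter fun b => φ b = y).card : ℝ)) / 2 := by
    have e : ∀ xy ∈ X ×ˢ Y, c xy * dEnt (unif (A.filter fun a => φ a = xy.1))
          (unif (B.filter fun b => φ b = xy.2))
        = c xy * ent (subDist (unif (A.filter fun a => φ a = xy.1))
            (unif (B.filter fun b => φ b = xy.2)))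
          - (c xy * Real.log ((A.filter fun a => φ a = xy.1).card : ℝ)) / 2
          - (c xy * Real.log ((B.filter fun b => φ b = xy.2).card : ℝ)) / 2 := by
      intro xy hxy
      rw [hdval xy hxy]
      ring
    rw [Finset.sum_congr rfl e, Finset.sum_sub_distrib, Finset.sum_sub_distrib,
      ← Finset.sum_div, ← Finset.sum_div,
      hsep1 (fun x => Real.log ((A.filter fun a => φ a = x).card : ℝ)),
      hsep2 (fun y => Real.log ((B.filter fun b => φ b = y).card : ℝ))]
  -- the fibring inequality in dEnt form
  have hfibring : dEnt pφ qφ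
      ≤ dEnt (unif A) (unif B) - ∑ xy ∈ X ×ˢ Y, c xy *
          dEnt (unif (A.filter fun a => φ a = xy.1)) (unif (B.filter fun b => φ b = xy.2)) := by
    rw [hS1, hkval, hkbval, entp2, entq2]
    linarith [HSTAR]
  -- the weight identity ∑ c log(...) = M
  have hMid : ∑ xy ∈ X ×ˢ Y, c xy * Real.log
        (((A.card : ℝ) / ((A.filter fun a => φ a = xy.1).card : ℝ))
          * ((B.card : ℝ) / ((B.filter fun b => φ b = xy.2).card : ℝ)))
      = ent pφ + ent qφ := by
    have e : ∀ xy ∈ X ×ˢ Y, c xy * Real.log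
          (((A.card : ℝ) / ((A.filter fun a => φ a = xy.1).card : ℝ))
            * ((B.card : ℝ) / ((B.filter fun b => φ b = xy.2).card : ℝ)))
        = c xy * Real.log ((A.card : ℝ) / ((A.filter fun a => φ a = xy.1).card : ℝ))
          + c xy * Real.log ((B.card : ℝ) / ((B.filter fun b => φ b = xy.2).card : ℝ)) := by
      intro xy hxy
      obtain ⟨hx, hy⟩ := Finset.mem_product.mp hxy
      rw [Real.log_mul (ne_of_gt (div_pos ha (hcardA xy.1 hx)))
        (ne_of_gt (div_pos hb (hcardB xy.2 hy)))]
      ring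
    rw [Finset.sum_congr rfl e, Finset.sum_add_distrib,
      hsep1 (fun x => Real.log ((A.card : ℝ) / ((A.filter fun a => φ a = x).card : ℝ))),
      hsep2 (fun y => Real.log ((B.card : ℝ) / ((B.filter fun b => φ b = y).card : ℝ))),
      hentpA, hentqA]
  -- the averaged quantity is nonnegative
  have hge : (0:ℝ) ≤ ∑ xy ∈ X ×ˢ Y, c xy *
      ((ent pφ + ent qφ) * (dEnt (unif A) (unif B)
          - dEnt (unif (A.filter fun a => φ a = xy.1)) (unif (B.filter fun b => φ b = xy.2)))
        - dEnt pφ qφ * Real.log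
          (((A.card : ℝ) / ((A.filter fun a => φ a = xy.1).card : ℝ))
            * ((B.card : ℝ) / ((B.filter fun b => φ b = xy.2).card : ℝ)))) := by
    have e : ∀ xy ∈ X ×ˢ Y, c xy *
        ((ent pφ + ent qφ) * (dEnt (unif A) (unif B)
            - dEnt (unif (A.filter fun a => φ a = xy.1)) (unif (B.filter fun b => φ b = xy.2)))
          - dEnt pφ qφ * Real.log
            (((A.card : ℝ) / ((A.filter fun a => φ a = xy.1).card : ℝ))
              * ((B.card : ℝ) / ((B.filter fun b => φ b = xy.2).card : ℝ))))
        = ((ent pφ + ent qφ) * dEnt (unif A) (unif B)) * c xy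
          - (ent pφ + ent qφ) * (c xy * dEnt (unif (A.filter fun a => φ a = xy.1))
              (unif (B.filter fun b => φ b = xy.2)))
          - dEnt pφ qφ * (c xy * Real.log
            (((A.card : ℝ) / ((A.filter fun a => φ a = xy.1).card : ℝ))
              * ((B.card : ℝ) / ((B.filter fun b => φ b = xy.2).card : ℝ)))) := by
      intro xy _
      ring
    rw [Finset.sum_congr rfl e, Finset.sum_sub_distrib, Finset.sum_sub_distrib,
      ← Finset.mul_sum, ← Finset.mul_sum, ← Finset.mul_sum, hcsum, hMid, mul_one]
    have hM0 : 0 ≤ ent pφ + ent qφ := by linarith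
    have h2 := mul_le_mul_of_nonneg_left hfibring hM0
    have h3 : (ent pφ + ent qφ) * (dEnt (unif A) (unif B) - ∑ xy ∈ X ×ˢ Y, c xy *
          dEnt (unif (A.filter fun a => φ a = xy.1)) (unif (B.filter fun b => φ b = xy.2)))
        = (ent pφ + ent qφ) * dEnt (unif A) (unif B)
          - (ent pφ + ent qφ) * ∑ xy ∈ X ×ˢ Y, c xy *
            dEnt (unif (A.filter fun a => φ a = xy.1)) (unif (B.filter fun b => φ b = xy.2)) := by
      ring
    nlinarith [h2, h3]
  -- but by assumption every term is negative
  have hlt : ∑ xy ∈ X ×ˢ Y, c xy *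
      ((ent pφ + ent qφ) * (dEnt (unif A) (unif B)
          - dEnt (unif (A.filter fun a => φ a = xy.1)) (unif (B.filter fun b => φ b = xy.2)))
        - dEnt pφ qφ * Real.log
          (((A.card : ℝ) / ((A.filter fun a => φ a = xy.1).card : ℝ))
            * ((B.card : ℝ) / ((B.filter fun b => φ b = xy.2).card : ℝ)))) < 0 := by
    have h0 : (0:ℝ) = ∑ _xy ∈ X ×ˢ Y, (0:ℝ) := by rw [Finset.sum_const_zero]
    rw [h0]
    refine Finset.sum_lt_sum_of_nonempty hXY ?_
    intro xy hxy
    obtain ⟨hx, hy⟩ := Finset.mem_product.mp hxy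
    have hcpos : 0 < c xy := by
      rw [hc_def]
      exact mul_pos (hpφpos xy.1 hx) (hqφpos xy.2 hy)
    have hbr := hcon xy.1 xy.2 (hfibA xy.1 hx) (hfibB xy.2 hy)
    exact mul_neg_of_pos_of_neg hcpos (by linarith)
  linarith


end
end
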